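/- arXiv:1108.2579 — 9 statements merged into one kernel-verified Lean document; each statement's English description precedes it below -/
import Mathlib

section
/- Let m ≥ 2 and a be integers with gcd(a, m) = 1. Then Q_m(a) ≡ (φ(m)/λ(m)) · C_m(a) (mod m), where φ is Euler's totient function and φ(m)/λ(m) is an integer since λ(m) divides φ(m). -/
/-- The Carmichael function `λ(m)`: the smallest positive integer `n` such that
`a ^ n ≡ 1 (mod m)` for every integer `a` coprime to `m`. -/
noncomputable def carmichael (m : ℕ) : ℕ :=
  sInf {n : ℕ | 0 < n ∧ ∀ a : ℤ, Int.gcd a m = 1 → a ^ n ≡ 1 [ZMOD (m : ℤ)]}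

/-- The Carmichael quotient `C_m(a) = (a^{λ(m)} - 1) / m`. -/
noncomputable def carQuot (m : ℕ) (a : ℤ) : ℤ := (a ^ carmichael m - 1) / m

/-- The Euler quotient `Q_m(a) = (a^{φ(m)} - 1) / m`. -/
def eulerQuot (m : ℕ) (a : ℤ) : ℤ := (a ^ Nat.totient m - 1) / m

lemma sq_dvd_aux (x : ℤ) : ∀ n : ℕ, x ^ 2 ∣ (1 + x) ^ n - 1 - n * x := by
  intro n
  induction n with
  | zero => simp
  | succ k ih =>
    obtain ⟨c, hc⟩ := ih
    refine ⟨(1 + x) * c + k, ?_⟩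
    push_cast
    linear_combination (1 + x) * hc

lemma mem_carmichael_set (m : ℕ) [NeZero m] (n : ℕ) :
    (0 < n ∧ ∀ a : ℤ, Int.gcd a m = 1 → a ^ n ≡ 1 [ZMOD (m : ℤ)]) ↔
      0 < n ∧ Monoid.exponent (ZMod m)ˣ ∣ n := by
  constructor
  · rintro ⟨hn, h⟩
    refine ⟨hn, Monoid.exponent_dvd_of_forall_pow_eq_one fun u => ?_⟩
    have hcop : Nat.Coprime (ZMod.val (u : ZMod m)) m := ZMod.val_coe_unit_coprime u
    have h2 := h ((ZMod.val (u : ZMod m) : ℕ) : ℤ) (by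
      rw [Int.gcd_natCast_natCast]; exact hcop)
    rw [← ZMod.intCast_eq_intCast_iff] at h2
    push_cast at h2
    rw [ZMod.natCast_val, ZMod.cast_id] at h2
    ext
    push_cast
    exact h2
  · rintro ⟨hn, hdvd⟩
    refine ⟨hn, fun a hga => ?_⟩
    have hcop : IsCoprime a (m : ℤ) := Int.isCoprime_iff_gcd_eq_one.mpr hga
    have hunit : IsUnit ((a : ZMod m)) := by
      have := hcop.map (Int.castRingHom (ZMod m))
      simpa [isCoprime_zero_right] using this
    obtain ⟨u, hu⟩ := hunit
    obtain ⟨k, hk⟩ := hdvd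
    have hu1 : u ^ n = 1 := by
      rw [hk, pow_mul, Monoid.pow_exponent_eq_one, one_pow]
    rw [← ZMod.intCast_eq_intCast_iff]
    push_cast
    rw [← hu, ← Units.val_pow_eq_pow_val, hu1, Units.val_one]

lemma carmichael_eq_exponent (m : ℕ) (hm : 2 ≤ m) :
    carmichael m = Monoid.exponent (ZMod m)ˣ := by
  haveI : NeZero m := ⟨by omega⟩
  haveI : Fact (1 < m) := ⟨hm⟩
  have hepos : 0 < Monoid.exponent (ZMod m)ˣ :=
    Nat.pos_of_ne_zero Monoid.exponent_ne_zero_of_finite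
  have hmem : Monoid.exponent (ZMod m)ˣ ∈
      {n : ℕ | 0 < n ∧ ∀ a : ℤ, Int.gcd a m = 1 → a ^ n ≡ 1 [ZMOD (m : ℤ)]} := by
    rw [Set.mem_setOf_eq, mem_carmichael_set]
    exact ⟨hepos, dvd_rfl⟩
  have hinf := Nat.sInf_mem (Set.nonempty_of_mem hmem)
  rw [Set.mem_setOf_eq, mem_carmichael_set] at hinf
  exact Nat.le_antisymm (Nat.sInf_le hmem) (Nat.le_of_dvd hinf.1 hinf.2)

theorem stmt0 (m : ℕ) (hm : 2 ≤ m) (a : ℤ) (ha : Int.gcd a m = 1) :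
    eulerQuot m a ≡ ((Nat.totient m / carmichael m : ℕ) : ℤ) * carQuot m a [ZMOD (m : ℤ)] := by
  haveI : NeZero m := ⟨by omega⟩
  haveI : Fact (1 < m) := ⟨hm⟩
  have hLe := carmichael_eq_exponent m hm
  have hLpos : 0 < carmichael m := hLe ▸ Nat.pos_of_ne_zero Monoid.exponent_ne_zero_of_finite
  have hLdvd : carmichael m ∣ Nat.totient m := by
    rw [hLe, ← ZMod.card_units_eq_totient m]
    exact Group.exponent_dvd_card
  -- carmichael congruence for a
  have hcar : a ^ carmichael m ≡ 1 [ZMOD (m : ℤ)] := by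
    have : 0 < carmichael m ∧ ∀ b : ℤ, Int.gcd b m = 1 →
        b ^ carmichael m ≡ 1 [ZMOD (m : ℤ)] := by
      rw [mem_carmichael_set, hLe]
      exact ⟨hLe ▸ hLpos, dvd_rfl⟩
    exact this.2 a ha
  have hmdvd : (m : ℤ) ∣ a ^ carmichael m - 1 := (Int.ModEq.dvd hcar.symm)
  set k := Nat.totient m / carmichael m with hk
  have hφ : Nat.totient m = carmichael m * k := (Nat.mul_div_cancel' hLdvd).symm
  set C := carQuot m a with hC
  have hmC : (m : ℤ) * C = a ^ carmichael m - 1 := by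
    rw [hC, carQuot, Int.mul_ediv_cancel' hmdvd]
  -- a^φ - 1 = (1 + mC)^k - 1
  have hx : a ^ Nat.totient m = (1 + (m : ℤ) * C) ^ k := by
    rw [hφ, pow_mul, hmC]; ring_nf
  obtain ⟨c, hc⟩ := sq_dvd_aux ((m : ℤ) * C) k
  have hm0 : (m : ℤ) ≠ 0 := by positivity
  have hQdvd : (m : ℤ) ∣ a ^ Nat.totient m - 1 := by
    rw [hx]
    have : (1 + (m : ℤ) * C) ^ k - 1 = ((m : ℤ) * C) ^ 2 * c + k * ((m : ℤ) * C) := by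
      linarith [hc]
    rw [this]
    exact dvd_add (Dvd.dvd.mul_right (dvd_pow (dvd_mul_right _ _) two_ne_zero) c)
      ⟨k * C, by ring⟩
  have hmQ : (m : ℤ) * eulerQuot m a = a ^ Nat.totient m - 1 := by
    rw [eulerQuot, Int.mul_ediv_cancel' hQdvd]
  have hmQ2 : (m : ℤ) * eulerQuot m a = (1 + (m : ℤ) * C) ^ k - 1 := by rw [hmQ, hx]
  have key : eulerQuot m a - (k : ℤ) * C = (m : ℤ) * (C ^ 2 * c) := by
    apply mul_left_cancel₀ hm0
    linear_combination hmQ2 + hc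
  exact Int.modEq_iff_dvd.mpr ⟨-(C ^ 2 * c), by linear_combination -key⟩
end

section
/- Let m ≥ 2 be an integer and a, b integers with gcd(ab, m) = 1. Then C_m(ab) ≡ C_m(a) + C_m(b) (mod m). -/
lemma int_pow_totient {m : ℕ} {a : ℤ} (h : Int.gcd a m = 1) :
    a ^ m.totient ≡ 1 [ZMOD (m : ℤ)] := by
  have hcop : Nat.Coprime a.natAbs m := h
  have hu : IsUnit ((a : ZMod m)) := by
    rcases Int.natAbs_eq a with h1 | h1
    · rw [h1, Int.cast_natCast]
      exact (ZMod.isUnit_iff_coprime _ _).mpr hcop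
    · rw [h1, Int.cast_neg, Int.cast_natCast]
      exact ((ZMod.isUnit_iff_coprime _ _).mpr hcop).neg
  have h2 : ((a : ZMod m)) ^ m.totient = 1 := by
    rw [← hu.unit_spec, ← Units.val_pow_eq_pow_val, ZMod.pow_totient, Units.val_one]
  have h3 : ((a ^ m.totient : ℤ) : ZMod m) = ((1 : ℤ) : ZMod m) := by
    push_cast
    exact h2
  exact (ZMod.intCast_eq_intCast_iff _ _ _).mp h3
theorem stmt1 (m : ℕ) (hm : 2 ≤ m) (a b : ℤ) (hab : Int.gcd (a * b) m = 1) :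
    carQuot m (a * b) ≡ carQuot m a + carQuot m b [ZMOD (m : ℤ)] := by
  have hm0 : (m : ℤ) ≠ 0 := by exact_mod_cast (by omega : m ≠ 0)
  have hab' : Nat.Coprime (a.natAbs * b.natAbs) m := by
    rwa [Int.gcd, Int.natAbs_mul] at hab
  have ha : Int.gcd a m = 1 := Nat.Coprime.coprime_dvd_left (dvd_mul_right _ _) hab'
  have hb : Int.gcd b m = 1 := Nat.Coprime.coprime_dvd_left (dvd_mul_left _ _) hab'
  have hS : carmichael m ∈ {n : ℕ | 0 < n ∧ ∀ a : ℤ, Int.gcd a m = 1 →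
      a ^ n ≡ 1 [ZMOD (m : ℤ)]} :=
    Nat.sInf_mem ⟨m.totient, Nat.totient_pos.mpr (by omega),
      fun x hx => int_pow_totient hx⟩
  obtain ⟨-, hall⟩ := hS
  have hdvd : ∀ x : ℤ, Int.gcd x m = 1 → (m : ℤ) ∣ x ^ carmichael m - 1 := by
    intro x hx
    have := (hall x hx).dvd
    simpa using (dvd_neg.mpr this)
  have hma : (m : ℤ) * carQuot m a = a ^ carmichael m - 1 :=
    Int.mul_ediv_cancel' (hdvd a ha)
  have hmb : (m : ℤ) * carQuot m b = b ^ carmichael m - 1 :=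
    Int.mul_ediv_cancel' (hdvd b hb)
  have hmab : (m : ℤ) * carQuot m (a * b) = (a * b) ^ carmichael m - 1 :=
    Int.mul_ediv_cancel' (hdvd (a * b) hab)
  have key : (m : ℤ) * carQuot m (a * b) =
      (m : ℤ) * (carQuot m a + carQuot m b + m * (carQuot m a * carQuot m b)) := by
    have ha' : a ^ carmichael m = m * carQuot m a + 1 := by linarith [hma]
    have hb' : b ^ carmichael m = m * carQuot m b + 1 := by linarith [hmb]
    rw [hmab, mul_pow, ha', hb']
    ring
  have heq := mul_left_cancel₀ hm0 key
  rw [heq]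
  exact Int.ModEq.symm (Int.modEq_iff_dvd.mpr ⟨carQuot m a * carQuot m b, by ring⟩)
end

section
/- Let m ≥ 2 be an integer, a and k integers with gcd(a, m) = 1, and α a positive integer. Then C_m(a + k·m^α) ≡ C_m(a) + k·λ(m)·a⁻¹·m^{α−1} (mod m^α), where a⁻¹ denotes a multiplicative inverse of a modulo m^α. (Note gcd(a + k·m^α, m) = 1, so the left-hand Carmichael quotient is defined.) -/
lemma key_sq_dvd (x y : ℤ) (n : ℕ) :
    (x - y) ^ 2 ∣ x ^ (n + 1) - y ^ (n + 1) - (n + 1 : ℤ) * y ^ n * (x - y) := by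
  induction n with
  | zero => simp
  | succ n ih =>
    obtain ⟨c, hc⟩ := ih
    exact ⟨x * c + (n + 1 : ℤ) * y ^ n, by push_cast at hc ⊢; linear_combination x * hc⟩

theorem stmt2 (m : ℕ) (hm : 2 ≤ m) (a k : ℤ) (ha : Int.gcd a m = 1) (α : ℕ) (hα : 1 ≤ α)
    (b : ℤ) (hb : a * b ≡ 1 [ZMOD ((m : ℤ) ^ α)]) :
    carQuot m (a + k * (m : ℤ) ^ α) ≡
      carQuot m a + k * (carmichael m : ℤ) * b * (m : ℤ) ^ (α - 1) [ZMOD ((m : ℤ) ^ α)] := by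
  haveI : NeZero m := ⟨by omega⟩
  have hm0 : (m : ℤ) ≠ 0 := by exact_mod_cast (by omega : m ≠ 0)
  -- the defining set is nonempty
  have hne : {n : ℕ | 0 < n ∧ ∀ a : ℤ, Int.gcd a m = 1 → a ^ n ≡ 1 [ZMOD (m : ℤ)]}.Nonempty := by
    refine ⟨m.totient, Nat.totient_pos.mpr (by omega), fun x hx => ?_⟩
    have hcop : IsCoprime x (m : ℤ) := Int.isCoprime_iff_gcd_eq_one.mpr hx
    have hunit : IsUnit ((x : ℤ) : ZMod m) := by
      have h2 := hcop.map (Int.castRingHom (ZMod m))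
      simp only [map_natCast, Int.coe_castRingHom] at h2
      rw [ZMod.natCast_self] at h2
      exact isCoprime_zero_right.mp h2
    obtain ⟨u, hu⟩ := hunit
    have ht := ZMod.pow_totient u
    rw [← ZMod.intCast_eq_intCast_iff]
    push_cast
    rw [← hu, ← Units.val_pow_eq_pow_val, ht, Units.val_one]
  have hmem : carmichael m ∈ {n : ℕ | 0 < n ∧ ∀ a : ℤ, Int.gcd a m = 1 → a ^ n ≡ 1 [ZMOD (m : ℤ)]} := by
    rw [carmichael]; exact Nat.sInf_mem hne
  set L := carmichael m with hLdef
  have hLpos : 0 < L := hmem.1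
  have hprop := hmem.2
  obtain ⟨n, hn⟩ : ∃ n, L = n + 1 := ⟨L - 1, by omega⟩
  set A := a + k * (m : ℤ) ^ α with hA
  have hpow : (m : ℤ) ^ α = (m : ℤ) ^ (α - 1) * m := by
    rw [← pow_succ]; congr 1; omega
  have hcop : IsCoprime a (m : ℤ) := Int.isCoprime_iff_gcd_eq_one.mpr ha
  have hgA : Int.gcd A (m : ℤ) = 1 := by
    rw [← Int.isCoprime_iff_gcd_eq_one]
    have : A = a + (m : ℤ) * (k * (m : ℤ) ^ (α - 1)) := by rw [hA, hpow]; ring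
    rw [this]
    exact hcop.add_mul_left_left _
  have hd1 : (m : ℤ) ∣ a ^ L - 1 := dvd_sub_comm.mp ((Int.modEq_iff_dvd).mp (hprop a ha))
  have hd2 : (m : ℤ) ∣ A ^ L - 1 := dvd_sub_comm.mp ((Int.modEq_iff_dvd).mp (hprop A hgA))
  have e1 : (m : ℤ) * carQuot m a = a ^ L - 1 := by
    rw [carQuot, ← hLdef]; exact Int.mul_ediv_cancel' hd1
  have e2 : (m : ℤ) * carQuot m A = A ^ L - 1 := by
    rw [carQuot, ← hLdef]; exact Int.mul_ediv_cancel' hd2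
  -- m ∣ a^n - b
  have hab1 : (m : ℤ) ∣ a * b - 1 := by
    have h := (Int.modEq_iff_dvd).mp hb
    exact dvd_trans (dvd_pow_self (m : ℤ) (by omega : α ≠ 0)) (dvd_sub_comm.mp h)
  have hanb : (m : ℤ) ∣ a ^ n - b := by
    have hmul : (m : ℤ) ∣ a * (a ^ n - b) := by
      have : a * (a ^ n - b) = (a ^ L - 1) - (a * b - 1) := by rw [hn]; ring
      rw [this]; exact dvd_sub hd1 hab1
    exact (hcop.symm.dvd_of_dvd_mul_left hmul)
  -- main divisibility at m^(α+1)
  have hkey : ((m : ℤ) ^ α * k) ^ 2 ∣ A ^ L - a ^ L - (L : ℤ) * a ^ n * (k * (m : ℤ) ^ α) := by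
    have h := key_sq_dvd A a n
    have hAa : A - a = k * (m : ℤ) ^ α := by rw [hA]; ring
    rw [hAa] at h
    rw [hn]
    push_cast
    convert h using 2
    ring
  have h1 : (m : ℤ) ^ (α + 1) ∣ A ^ L - a ^ L - (L : ℤ) * a ^ n * (k * (m : ℤ) ^ α) := by
    refine dvd_trans ?_ hkey
    have : ((m : ℤ) ^ α * k) ^ 2 = (m : ℤ) ^ (2 * α) * k ^ 2 := by ring
    rw [this]
    exact Dvd.dvd.mul_right (pow_dvd_pow _ (by omega)) _
  have h2 : (m : ℤ) ^ (α + 1) ∣ (L : ℤ) * k * (m : ℤ) ^ α * (a ^ n - b) := by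
    rw [pow_succ]
    exact mul_dvd_mul (Dvd.dvd.mul_left (dvd_refl _) _) hanb
  have h3 : (m : ℤ) ^ (α + 1) ∣ A ^ L - a ^ L - (L : ℤ) * k * b * (m : ℤ) ^ α := by
    have := dvd_add h1 h2
    convert this using 1
    · rfl
    ring
  -- conclude
  rw [Int.modEq_iff_dvd]
  rw [← mul_dvd_mul_iff_left hm0, ← pow_succ']
  have expand : (m : ℤ) * (carQuot m a + k * (L : ℤ) * b * (m : ℤ) ^ (α - 1) - carQuot m A)
      = -(A ^ L - a ^ L - (L : ℤ) * k * b * (m : ℤ) ^ α) := by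
    rw [mul_sub, mul_add, e2, ← mul_assoc, mul_comm ((m:ℤ)) (k * (L:ℤ) * b), mul_assoc,
      mul_comm ((m:ℤ)) ((m:ℤ)^(α-1)), ← hpow, e1]
    ring
  rw [expand, dvd_neg]
  exact h3
end

section
/- Let m ≥ 3 be an integer and a an integer with gcd(a, m) = 1. Then the sum over k = 0, 1, ..., m−1 of C_m(a + k·m) is congruent to 0 modulo m. -/
private lemma carmichael_spec (m : ℕ) (hm : 2 ≤ m) :
    0 < carmichael m ∧ ∀ a : ℤ, Int.gcd a m = 1 → a ^ carmichael m ≡ 1 [ZMOD (m : ℤ)] := by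
  have hne : (Nat.totient m) ∈
      {n : ℕ | 0 < n ∧ ∀ a : ℤ, Int.gcd a m = 1 → a ^ n ≡ 1 [ZMOD (m : ℤ)]} := by
    constructor
    · exact Nat.totient_pos.2 (by omega)
    · intro a hga
      have hco : IsCoprime a (m : ℤ) := Int.isCoprime_iff_gcd_eq_one.2 hga
      obtain ⟨u, v, huv⟩ := hco
      have hu : IsUnit ((a : ZMod m)) := by
        refine IsUnit.of_mul_eq_one (u : ZMod m) ?_
        have := congrArg (fun x : ℤ => (x : ZMod m)) huv
        push_cast at this
        simpa [ZMod.natCast_self, mul_comm] using this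
      have h2 : ((a : ZMod m)) ^ Nat.totient m = 1 := by
        have h3 := congrArg (Units.val) (ZMod.pow_totient hu.unit)
        rw [Units.val_pow_eq_pow_val, IsUnit.unit_spec] at h3
        simpa using h3
      have : ((a ^ Nat.totient m : ℤ) : ZMod m) = ((1 : ℤ) : ZMod m) := by
        push_cast; simpa using h2
      exact (ZMod.intCast_eq_intCast_iff _ _ _).1 this
  exact Nat.sInf_mem ⟨_, hne⟩

private lemma key_binom (a c : ℤ) : ∀ n : ℕ,
    (c ^ 2 : ℤ) ∣ (a + c) ^ n - a ^ n - n * a ^ (n - 1) * c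
  | 0 => by simp
  | 1 => by ring_nf; simp
  | (n + 2) => by
    obtain ⟨d, hd⟩ := key_binom a c (n + 1)
    refine ⟨(a + c) * d + (n + 1) * a ^ n, ?_⟩
    have h1 : ((a + c) ^ (n + 1) : ℤ) =
        a ^ (n + 1) + (n + 1) * a ^ n * c + c ^ 2 * d := by
      have : ((a + c) ^ (n + 1) - a ^ (n + 1) - (n + 1) * a ^ (n + 1 - 1) * c : ℤ)
          = c ^ 2 * d := hd
      simp only [Nat.add_sub_cancel] at this
      linarith
    have : ((a + c) ^ (n + 2) : ℤ) = (a + c) * (a ^ (n + 1) + (n + 1) * a ^ n * c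
        + c ^ 2 * d) := by rw [← h1]; ring
    rw [this]
    push_cast
    ring_nf

theorem stmt3 (m : ℕ) (hm : 3 ≤ m) (a : ℤ) (ha : Int.gcd a m = 1) :
    ∑ k ∈ Finset.range m, carQuot m (a + (k : ℤ) * m) ≡ 0 [ZMOD (m : ℤ)] := by
  obtain ⟨hLpos, hL⟩ := carmichael_spec m (by omega)
  set L := carmichael m with hLdef
  have hmz : (m : ℤ) ≠ 0 := by positivity
  -- L is even
  have hLeven : Even L := by
    have hg : Int.gcd (-1) m = 1 := by simp
    have h1 := hL (-1) hg
    rcases Nat.even_or_odd L with h | h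
    · exact h
    · exfalso
      have : ((-1 : ℤ)) ^ L = -1 := h.neg_one_pow
      rw [this] at h1
      have : (m : ℤ) ∣ 1 - (-1) := (Int.modEq_iff_dvd.1 h1)
      have : (m : ℤ) ∣ 2 := by simpa using this
      have := Int.le_of_dvd (by norm_num) this
      omega
  obtain ⟨t, ht⟩ := hLeven
  -- coprimality of a + k*m
  have hcop : ∀ k : ℕ, Int.gcd (a + (k : ℤ) * m) m = 1 := by
    intro k
    have hco : IsCoprime a (m : ℤ) := Int.isCoprime_iff_gcd_eq_one.2 ha
    exact Int.isCoprime_iff_gcd_eq_one.1 (by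
      simpa [mul_comm] using hco.add_mul_right_left (k : ℤ))
  -- each term: m ∣ (a + k*m)^L - 1, and carQuot * m = that
  have hdvd : ∀ k : ℕ, (m : ℤ) ∣ (a + (k : ℤ) * m) ^ L - 1 := by
    intro k
    have := hL _ (hcop k)
    exact (Int.ModEq.dvd this.symm)
  have hquot : ∀ k : ℕ, carQuot m (a + (k : ℤ) * m) * m = (a + (k : ℤ) * m) ^ L - 1 := by
    intro k
    exact Int.ediv_mul_cancel (hdvd k)
  -- suffices m^2 ∣ sum of ((a+km)^L - 1)
  have hsum : ((m : ℤ) ^ 2) ∣ ∑ k ∈ Finset.range m, ((a + (k : ℤ) * m) ^ L - 1) := by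
    have step : ∀ k : ℕ, ((m : ℤ) ^ 2) ∣
        ((a + (k : ℤ) * m) ^ L - a ^ L - L * a ^ (L - 1) * ((k : ℤ) * m)) := by
      intro k
      have := key_binom a ((k : ℤ) * m) L
      exact dvd_trans (by rw [mul_pow]; exact dvd_mul_left _ _) this
    have hsplit : (∑ k ∈ Finset.range m, ((a + (k : ℤ) * m) ^ L - 1))
        = (∑ k ∈ Finset.range m,
            ((a + (k : ℤ) * m) ^ L - a ^ L - L * a ^ (L - 1) * ((k : ℤ) * m)))
          + (m : ℤ) * (a ^ L - 1)
          + (L : ℤ) * a ^ (L - 1) * m * (∑ k ∈ Finset.range m, (k : ℤ)) := by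
      have hpt : ∀ k ∈ Finset.range m, ((a + (k : ℤ) * m) ^ L - 1)
          = ((a + (k : ℤ) * m) ^ L - a ^ L - (L : ℤ) * a ^ (L - 1) * ((k : ℤ) * m))
            + ((a ^ L - 1) + (L : ℤ) * a ^ (L - 1) * m * (k : ℤ)) := by
        intro k _; ring
      rw [Finset.sum_congr rfl hpt, Finset.sum_add_distrib, Finset.sum_add_distrib,
        Finset.sum_const, Finset.card_range, nsmul_eq_mul, ← Finset.mul_sum]
      ring
    rw [hsplit]
    refine dvd_add (dvd_add (Finset.dvd_sum fun k _ => step k) ?_) ?_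
    · obtain ⟨d, hd⟩ := Int.ModEq.dvd (hL a ha).symm
      exact ⟨d, by rw [hd]; ring⟩
    · -- L * a^(L-1) * m * (m(m-1)/2) with L = 2t
      have hgauss : (2 : ℤ) * (∑ k ∈ Finset.range m, (k : ℤ)) = m * (m - 1) := by
        have := Finset.sum_range_id_mul_two m
        have h2 : ((∑ i ∈ Finset.range m, i) * 2 : ℕ) = m * (m - 1) := this
        have := congrArg (fun x : ℕ => (x : ℤ)) h2
        push_cast [Nat.cast_sub (by omega : 1 ≤ m)] at this
        linarith
      refine ⟨(t : ℤ) * a ^ (L - 1) * (m - 1), ?_⟩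
      have h2t : ((L : ℤ)) = 2 * t := by rw [ht]; push_cast; ring
      rw [h2t]
      calc 2 * (t : ℤ) * a ^ (L - 1) * m * (∑ k ∈ Finset.range m, (k : ℤ))
          = (t : ℤ) * a ^ (L - 1) * m * (2 * (∑ k ∈ Finset.range m, (k : ℤ))) := by ring
        _ = (t : ℤ) * a ^ (L - 1) * m * (m * (m - 1)) := by rw [hgauss]
        _ = (m : ℤ) ^ 2 * ((t : ℤ) * a ^ (L - 1) * (m - 1)) := by ring
  -- conclude
  have hfinal : (m : ℤ) ∣ ∑ k ∈ Finset.range m, carQuot m (a + (k : ℤ) * m) := by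
    obtain ⟨d, hd⟩ := hsum
    have hS : (∑ k ∈ Finset.range m, carQuot m (a + (k : ℤ) * m)) * m
        = (m : ℤ) ^ 2 * d := by
      rw [Finset.sum_mul]
      rw [Finset.sum_congr rfl fun k _ => hquot k]
      exact hd
    have : (∑ k ∈ Finset.range m, carQuot m (a + (k : ℤ) * m)) * m
        = ((m : ℤ) * d) * m := by rw [hS]; ring
    have := mul_right_cancel₀ hmz this
    exact ⟨d, this⟩
  exact (Int.modEq_zero_iff_dvd).2 hfinal
end

section
/- Let m ≥ 2 be an integer, a an integer with gcd(a, m) = 1, and let n = ord_m(a) be the multiplicative order of a modulo m. Then C_m(a) ≡ (λ(m)/n) · Σ_{r=1, r ∈ ⟨a⟩}^{m} (a·r)⁻¹ · ⌊a·r/m⌋ (mod m), where the sum is over integers r with 1 ≤ r ≤ m whose residue class lies in the subgroup ⟨a⟩ of (ℤ/mℤ)* generated by a, (a·r)⁻¹ denotes a multiplicative inverse of a·r modulo m, and λ(m)/n is an integer since n divides λ(m). -/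
section Aux

/-- units from coprimality over ℤ -/
lemma aux_unit_of_gcd (m : ℕ) (b : ℤ) (hb : Int.gcd b m = 1) :
    IsUnit ((b : ℤ) : ZMod m) := by
  obtain ⟨u, v, huv⟩ := Int.isCoprime_iff_gcd_eq_one.mpr hb
  refine IsUnit.of_mul_eq_one ((u : ℤ) : ZMod m) ?_
  have h := congrArg (fun x : ℤ => ((x : ℤ) : ZMod m)) huv
  push_cast at h
  rw [ZMod.natCast_self] at h
  linear_combination h

/-- the Carmichael function works -/
lemma aux_carmichael_spec (m : ℕ) (hm : 2 ≤ m) :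
    0 < carmichael m ∧
      ∀ b : ℤ, Int.gcd b m = 1 → b ^ carmichael m ≡ 1 [ZMOD (m : ℤ)] := by
  have hne : Set.Nonempty {n : ℕ | 0 < n ∧ ∀ a : ℤ, Int.gcd a m = 1 →
      a ^ n ≡ 1 [ZMOD (m : ℤ)]} := by
    refine ⟨m.totient, Nat.totient_pos.mpr (by omega), fun b hb => ?_⟩
    obtain ⟨w, hw⟩ := aux_unit_of_gcd m b hb
    have h1 : ((b : ℤ) : ZMod m) ^ m.totient = 1 := by
      rw [← hw, ← Units.val_pow_eq_pow_val, ZMod.pow_totient, Units.val_one]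
    rw [← ZMod.intCast_eq_intCast_iff]
    push_cast
    exact h1
  exact Nat.sInf_mem hne

/-- expansion of a product modulo squares -/
lemma aux_sq_zero_prod {R : Type*} [CommRing R] {c : R} (hc : c * c = 0)
    {ι : Type*} [DecidableEq ι] (s : Finset ι) (x y : ι → R) :
    ∏ i ∈ s, (x i + c * y i) =
      ∏ i ∈ s, x i + c * ∑ i ∈ s, y i * ∏ j ∈ s.erase i, x j := by
  induction s using Finset.induction with
  | empty => simp
  | @insert a s ha ih =>
    rw [Finset.prod_insert ha, ih, Finset.prod_insert ha, Finset.sum_insert ha,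
      Finset.erase_insert ha]
    have herase : ∀ i ∈ s, ((insert a s).erase i) = insert a (s.erase i) := by
      intro i hi
      rw [Finset.erase_insert_of_ne]
      rintro rfl; exact ha hi
    have hsum : ∑ i ∈ s, y i * ∏ j ∈ (insert a s).erase i, x j
        = x a * ∑ i ∈ s, y i * ∏ j ∈ s.erase i, x j := by
      rw [Finset.mul_sum]
      refine Finset.sum_congr rfl fun i hi => ?_
      rw [herase i hi, Finset.prod_insert (fun h => ha (Finset.mem_of_mem_erase h))]
      ring
    rw [hsum]
    set P := ∏ i ∈ s, x i
    set T := ∑ i ∈ s, y i * ∏ j ∈ s.erase i, x j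
    linear_combination (y a * T) * hc

/-- binomial for nilpotents of order 2 -/
lemma aux_one_add_pow {R : Type*} [CommRing R] {c : R} (hc : c * c = 0) (k : ℕ) :
    (1 + c) ^ k = 1 + (k : R) * c := by
  induction k with
  | zero => simp
  | succ k ih =>
    rw [pow_succ, ih]
    push_cast
    linear_combination (k : R) * hc

/-- cancellation of `m` in `ZMod (m^2)` -/
lemma aux_mul_m_cancel (m : ℕ) (hm : 0 < m) (x y : ZMod (m ^ 2))
    (h : ((m : ℕ) : ZMod (m ^ 2)) * x = ((m : ℕ) : ZMod (m ^ 2)) * y) :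
    (ZMod.castHom (dvd_pow_self m two_ne_zero) (ZMod m)) x
      = (ZMod.castHom (dvd_pow_self m two_ne_zero) (ZMod m)) y := by
  haveI : NeZero m := ⟨by omega⟩
  haveI : NeZero (m ^ 2) := ⟨by positivity⟩
  have key : ∀ z : ZMod (m ^ 2), ((m : ℕ) : ZMod (m ^ 2)) * z = 0 →
      (ZMod.castHom (dvd_pow_self m two_ne_zero) (ZMod m)) z = 0 := by
    intro z hz
    have hz2 : z = ((z.val : ℕ) : ZMod (m ^ 2)) := by
      rw [ZMod.natCast_val, ZMod.cast_id]
    rw [hz2, ← Nat.cast_mul, ZMod.natCast_eq_zero_iff] at hz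
    have hdvd : m ∣ z.val := by
      rcases hz with ⟨k, hk⟩
      exact ⟨k, Nat.eq_of_mul_eq_mul_left hm (by rw [hk]; ring)⟩
    rw [ZMod.castHom_apply, ← ZMod.natCast_val, ZMod.natCast_eq_zero_iff]
    exact hdvd
  have := key (x - y) (by rw [mul_sub, h, sub_self])
  rw [map_sub, sub_eq_zero] at this
  exact this
end Aux

open scoped Classical in
/-- Lerch's expression for the Carmichael quotient: with `n = ord_m a`,
`C_m(a) ≡ (λ(m)/n) · Σ_{r=1, r ∈ ⟨a⟩}^{m} (a·r)⁻¹ · ⌊a·r/m⌋ (mod m)`,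
stated as an equality in `ZMod m` (where the inverse is the multiplicative
inverse of `a·r` modulo `m`). -/
theorem stmt8 (m : ℕ) (hm : 2 ≤ m) (a : ℤ) (ha : Int.gcd a m = 1)
    (n : ℕ) (hn : n = orderOf ((a : ZMod m))) :
    ((carQuot m a : ℤ) : ZMod m) =
      ((carmichael m / n : ℕ) : ZMod m) *
        ∑ r ∈ (Finset.Icc 1 m).filter
            (fun r => ∃ j : ℕ, ((r : ℕ) : ZMod m) = (a : ZMod m) ^ j),
          (((a * (r : ℤ) : ℤ)) : ZMod m)⁻¹ * (((a * (r : ℤ)).fdiv m : ℤ) : ZMod m) := by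
  haveI : NeZero m := ⟨by omega⟩
  haveI : Fact (1 < m) := ⟨by omega⟩
  haveI : NeZero (m ^ 2) := ⟨by positivity⟩
  set A : ZMod m := ((a : ℤ) : ZMod m) with hA
  have hAu : IsUnit A := aux_unit_of_gcd m a ha
  obtain ⟨w, hw⟩ := hAu
  have hAu : IsUnit A := ⟨w, hw⟩
  have hnpos : 0 < n := by
    rw [hn, ← hw, orderOf_units]
    exact orderOf_pos w
  have hAn : A ^ n = 1 := by rw [hn]; exact pow_orderOf_eq_one A
  obtain ⟨hLpos, hLspec⟩ := aux_carmichael_spec m hm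
  set L := carmichael m with hLdef
  have hALone : A ^ L = 1 := by
    have h := hLspec a ha
    rw [← ZMod.intCast_eq_intCast_iff] at h
    push_cast at h
    exact h
  have hndvd : n ∣ L := by rw [hn]; exact orderOf_dvd_of_pow_eq_one hALone
  set S : Finset ℕ := (Finset.Icc 1 m).filter
      (fun r => ∃ j : ℕ, ((r : ℕ) : ZMod m) = A ^ j) with hSdef
  have hmemS : ∀ r : ℕ, r ∈ S ↔ (1 ≤ r ∧ r ≤ m ∧ ∃ j : ℕ, ((r : ℕ) : ZMod m) = A ^ j) := by
    intro r
    simp [hSdef, Finset.mem_filter, Finset.mem_Icc, and_assoc]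
  have hSunit : ∀ r ∈ S, IsUnit ((r : ℕ) : ZMod m) := by
    intro r hr
    obtain ⟨-, -, j, hj⟩ := (hmemS r).mp hr
    rw [hj]; exact hAu.pow j
  have hSlt : ∀ r ∈ S, r < m := by
    intro r hr
    obtain ⟨-, h2, -⟩ := (hmemS r).mp hr
    rcases lt_or_eq_of_le h2 with h | rfl
    · exact h
    · exfalso
      have := hSunit r hr
      rw [ZMod.natCast_self] at this
      exact not_isUnit_zero this
  have hinjS : ∀ r ∈ S, ∀ r' ∈ S, ((r : ℕ) : ZMod m) = ((r' : ℕ) : ZMod m) → r = r' := by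
    intro r hr r' hr' h
    have h2 := congrArg ZMod.val h
    rwa [ZMod.val_cast_of_lt (hSlt r hr), ZMod.val_cast_of_lt (hSlt r' hr')] at h2
  have hvalmem : ∀ x : ZMod m, (∃ j : ℕ, x = A ^ j) → x.val ∈ S := by
    rintro x ⟨j, rfl⟩
    have hunit : IsUnit (A ^ j) := hAu.pow j
    have hne : (A ^ j).val ≠ 0 := by
      rw [Ne, ZMod.val_eq_zero]
      intro h0
      rw [h0] at hunit
      exact not_isUnit_zero hunit
    refine (hmemS _).mpr ⟨by omega, le_of_lt (lt_of_lt_of_le (ZMod.val_lt _) le_rfl), j, ?_⟩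
    rw [ZMod.natCast_val, ZMod.cast_id]
  have hcard : S.card = n := by
    have hSeq : S = (Finset.range n).image (fun j => (A ^ j).val) := by
      ext r
      constructor
      · intro hr
        obtain ⟨-, -, j, hj⟩ := (hmemS r).mp hr
        refine Finset.mem_image.mpr ⟨j % n, Finset.mem_range.mpr (Nat.mod_lt _ hnpos), ?_⟩
        have hpow : A ^ (j % n) = A ^ j := by rw [hn]; exact pow_mod_orderOf A j
        rw [hpow, ← hj, ZMod.val_cast_of_lt (hSlt r hr)]
      · intro hr
        obtain ⟨j, -, rfl⟩ := Finset.mem_image.mp hr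
        exact hvalmem _ ⟨j, rfl⟩
    rw [hSeq, Finset.card_image_of_injOn, Finset.card_range]
    intro j hj k hk hjk
    simp only [Finset.coe_range, Set.mem_Iio] at hj hk
    have hj' : j < orderOf A := by rwa [← hn]
    have hk' : k < orderOf A := by rwa [← hn]
    apply pow_injOn_Iio_orderOf hj' hk'
    show A ^ j = A ^ k
    have hjk' : (A ^ j).val = (A ^ k).val := hjk
    have h1 : (((A ^ j).val : ℕ) : ZMod m) = (((A ^ k).val : ℕ) : ZMod m) := by rw [hjk']
    rwa [ZMod.natCast_val, ZMod.cast_id, ZMod.natCast_val, ZMod.cast_id] at h1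
  -- now the mod m^2 computation
  set c : ZMod (m ^ 2) := ((m : ℕ) : ZMod (m ^ 2)) with hc_def
  have hc : c * c = 0 := by
    rw [hc_def, ← Nat.cast_mul, ← pow_two, ZMod.natCast_self]
  set t : ℕ → ℕ := fun r => ((a * (r : ℤ)) % (m : ℤ)).toNat with ht_def
  have htnonneg : ∀ r : ℕ, (0 : ℤ) ≤ (a * (r : ℤ)) % (m : ℤ) := by
    intro r
    exact Int.emod_nonneg _ (by exact_mod_cast (by omega : m ≠ 0))
  have htoNat : ∀ r : ℕ, ((t r : ℕ) : ℤ) = (a * (r : ℤ)) % (m : ℤ) := by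
    intro r
    exact Int.toNat_of_nonneg (htnonneg r)
  have htcast : ∀ r : ℕ, ((t r : ℕ) : ZMod m) = A * ((r : ℕ) : ZMod m) := by
    intro r
    calc ((t r : ℕ) : ZMod m) = (((t r : ℕ) : ℤ) : ZMod m) := by push_cast; ring
    _ = (((a * (r : ℤ)) % (m : ℤ) : ℤ) : ZMod m) := by rw [htoNat]
    _ = ((a * (r : ℤ) : ℤ) : ZMod m) := ZMod.intCast_mod _ _
    _ = A * ((r : ℕ) : ZMod m) := by push_cast; ring
  have htlt : ∀ r : ℕ, t r < m := by
    intro r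
    have h1 := Int.emod_lt_of_pos (a * (r : ℤ)) (show (0 : ℤ) < (m : ℕ) by exact_mod_cast (by omega : 0 < m))
    have h2 := htoNat r
    omega
  have htmem : ∀ r ∈ S, t r ∈ S := by
    intro r hr
    obtain ⟨-, -, j, hj⟩ := (hmemS r).mp hr
    have hx : ((t r : ℕ) : ZMod m) = A ^ (j + 1) := by
      rw [htcast, hj, pow_succ]; ring
    have hunit : IsUnit ((t r : ℕ) : ZMod m) := by rw [hx]; exact hAu.pow _
    have hne : t r ≠ 0 := by
      intro h0
      rw [h0, Nat.cast_zero] at hunit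
      exact not_isUnit_zero hunit
    exact (hmemS _).mpr ⟨by omega, by have := htlt r; omega, j + 1, hx⟩
  set x : ℕ → ZMod (m ^ 2) := fun r => ((((a * (r : ℤ)) % (m : ℤ)) : ℤ) : ZMod (m ^ 2)) with hx_def
  set y : ℕ → ZMod (m ^ 2) := fun r => ((((a * (r : ℤ)) / (m : ℤ)) : ℤ) : ZMod (m ^ 2)) with hy_def
  set T : ZMod (m ^ 2) := ∑ r ∈ S, y r * ∏ j ∈ S.erase r, x j with hT_def
  set P : ZMod (m ^ 2) := ∏ r ∈ S, ((r : ℕ) : ZMod (m ^ 2)) with hP_def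
  have hprodx : ∏ r ∈ S, x r = P := by
    rw [hP_def]
    refine Finset.prod_bij (fun r _ => t r) htmem ?_ ?_ ?_
    · intro r hr r' hr' h
      apply hinjS r hr r' hr'
      have h' : t r = t r' := h
      have h2 : ((t r : ℕ) : ZMod m) = ((t r' : ℕ) : ZMod m) := by rw [h']
      rw [htcast, htcast] at h2
      exact hAu.mul_left_cancel h2
    · intro b hb
      obtain ⟨-, -, j, hj⟩ := (hmemS b).mp hb
      have hmem' : (A ^ (j + (n - 1))).val ∈ S := hvalmem _ ⟨j + (n - 1), rfl⟩
      refine ⟨(A ^ (j + (n - 1))).val, hmem', ?_⟩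
      apply hinjS _ (htmem _ hmem') b hb
      rw [htcast, ZMod.natCast_val, ZMod.cast_id, hj]
      calc A * A ^ (j + (n - 1)) = A ^ (j + (n - 1) + 1) := by rw [pow_succ]; ring
      _ = A ^ j * A ^ n := by rw [← pow_add]; congr 1; omega
      _ = A ^ j := by rw [hAn, mul_one]
    · intro r hr
      simp only [hx_def]
      rw [show ((a * (r : ℤ)) % (m : ℤ)) = ((t r : ℕ) : ℤ) from (htoNat r).symm]
      push_cast
      ring
  have hfactor : ∀ r : ℕ, ((a : ℤ) : ZMod (m ^ 2)) * ((r : ℕ) : ZMod (m ^ 2)) = x r + c * y r := by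
    intro r
    have hz : a * (r : ℤ) = (a * (r : ℤ)) % (m : ℤ) + (m : ℤ) * ((a * (r : ℤ)) / (m : ℤ)) := by
      have := Int.mul_ediv_add_emod (a * (r : ℤ)) (m : ℤ)
      linarith
    have h1 := congrArg (fun z : ℤ => ((z : ℤ) : ZMod (m ^ 2))) hz
    simp only [hx_def, hy_def, hc_def]
    push_cast at h1 ⊢
    linear_combination h1
  have hmain : ((a : ℤ) : ZMod (m ^ 2)) ^ n * P = P + c * T := by
    calc ((a : ℤ) : ZMod (m ^ 2)) ^ n * P
        = ∏ r ∈ S, (((a : ℤ) : ZMod (m ^ 2)) * ((r : ℕ) : ZMod (m ^ 2))) := by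
          rw [Finset.prod_mul_distrib, Finset.prod_const, hcard]
    _ = ∏ r ∈ S, (x r + c * y r) := Finset.prod_congr rfl (fun r _ => hfactor r)
    _ = ∏ r ∈ S, x r + c * T := aux_sq_zero_prod hc S x y
    _ = P + c * T := by rw [hprodx]
  have hPunit : IsUnit P := by
    rw [hP_def]
    refine Finset.prod_induction _ IsUnit (fun u v hu hv => hu.mul hv) isUnit_one ?_
    intro r hr
    rw [ZMod.isUnit_iff_coprime]
    exact ((ZMod.isUnit_iff_coprime r m).mp (hSunit r hr)).pow_right 2
  set u : ZMod (m ^ 2) := T * P⁻¹ with hu_def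
  have han2 : ((a : ℤ) : ZMod (m ^ 2)) ^ n = 1 + c * u := by
    have h1 : (((a : ℤ) : ZMod (m ^ 2)) ^ n * P) * P⁻¹ = (P + c * T) * P⁻¹ := by rw [hmain]
    rw [mul_assoc, ZMod.mul_inv_of_unit P hPunit, mul_one] at h1
    rw [h1, add_mul, ZMod.mul_inv_of_unit P hPunit, hu_def]
    ring
  have hcu : (c * u) * (c * u) = 0 := by linear_combination (u * u) * hc
  have haL : ((a : ℤ) : ZMod (m ^ 2)) ^ L = 1 + ((L / n : ℕ) : ZMod (m ^ 2)) * (c * u) := by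
    calc ((a : ℤ) : ZMod (m ^ 2)) ^ L = (((a : ℤ) : ZMod (m ^ 2)) ^ n) ^ (L / n) := by
          rw [← pow_mul, Nat.mul_div_cancel' hndvd]
    _ = (1 + c * u) ^ (L / n) := by rw [han2]
    _ = 1 + ((L / n : ℕ) : ZMod (m ^ 2)) * (c * u) := aux_one_add_pow hcu (L / n)
  have hdvdint : (m : ℤ) ∣ a ^ L - 1 := by
    have h := (hLspec a ha).symm
    exact h.dvd
  have hQ : (m : ℤ) * carQuot m a = a ^ L - 1 := by
    rw [carQuot, ← hLdef]
    exact Int.mul_ediv_cancel' hdvdint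
  have hcast : c * ((carQuot m a : ℤ) : ZMod (m ^ 2)) = c * (((L / n : ℕ) : ZMod (m ^ 2)) * u) := by
    have h1 := congrArg (fun z : ℤ => ((z : ℤ) : ZMod (m ^ 2))) hQ
    push_cast at h1
    rw [haL] at h1
    rw [hc_def]
    linear_combination h1
  have hφ := aux_mul_m_cancel m (by omega) _ _ hcast
  set φ := ZMod.castHom (dvd_pow_self m two_ne_zero) (ZMod m) with hφ_def
  rw [map_intCast, map_mul, map_natCast] at hφ
  -- compute φ u
  have hφP : φ P = ∏ r ∈ S, ((r : ℕ) : ZMod m) := by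
    rw [hP_def, map_prod]
    exact Finset.prod_congr rfl (fun r _ => map_natCast φ r)
  have hPV : φ P * φ P⁻¹ = 1 := by
    rw [← map_mul, ZMod.mul_inv_of_unit P hPunit, map_one]
  have hφx : ∀ r : ℕ, φ (x r) = ((a * (r : ℤ) : ℤ) : ZMod m) := by
    intro r
    rw [hx_def]
    simp only []
    rw [map_intCast, ZMod.intCast_mod]
  have hφy : ∀ r : ℕ, φ (y r) = (((a * (r : ℤ)) / (m : ℤ) : ℤ) : ZMod m) := by
    intro r
    rw [hy_def]
    exact map_intCast φ _
  have hprodm : ∏ j ∈ S, ((a * (j : ℤ) : ℤ) : ZMod m) = ∏ r ∈ S, ((r : ℕ) : ZMod m) := by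
    have h1 : ∀ j ∈ S, ((a * (j : ℤ) : ℤ) : ZMod m) = A * ((j : ℕ) : ZMod m) := by
      intro j _
      push_cast
      ring
    rw [Finset.prod_congr rfl h1, Finset.prod_mul_distrib, Finset.prod_const, hcard, hAn, one_mul]
  have hterm : ∀ r ∈ S, (∏ j ∈ S.erase r, ((a * (j : ℤ) : ℤ) : ZMod m)) * (φ P⁻¹)
      = ((a * (r : ℤ) : ℤ) : ZMod m)⁻¹ := by
    intro r hr
    symm
    apply ZMod.inv_eq_of_mul_eq_one
    calc ((a * (r : ℤ) : ℤ) : ZMod m) * ((∏ j ∈ S.erase r, ((a * (j : ℤ) : ℤ) : ZMod m)) * (φ P⁻¹))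
        = (∏ j ∈ S, ((a * (j : ℤ) : ℤ) : ZMod m)) * (φ P⁻¹) := by
          rw [← Finset.mul_prod_erase S _ hr]
          ring
    _ = φ P * φ P⁻¹ := by rw [hprodm, hφP]
    _ = 1 := hPV
  have hφu : φ u = ∑ r ∈ S, ((a * (r : ℤ) : ℤ) : ZMod m)⁻¹ * (((a * (r : ℤ)) / (m : ℤ) : ℤ) : ZMod m) := by
    rw [hu_def, map_mul, hT_def, map_sum, Finset.sum_mul]
    refine Finset.sum_congr rfl (fun r hr => ?_)
    rw [map_mul, map_prod]
    have h2 : ∏ j ∈ S.erase r, φ (x j) = ∏ j ∈ S.erase r, ((a * (j : ℤ) : ℤ) : ZMod m) :=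
      Finset.prod_congr rfl (fun j _ => hφx j)
    rw [h2, hφy, mul_assoc, hterm r hr]
    ring
  -- finish
  have hfd : ∀ r : ℕ, ((a * (r : ℤ)).fdiv (m : ℤ) : ℤ) = (a * (r : ℤ)) / (m : ℤ) := by
    intro r
    exact Int.fdiv_eq_ediv_of_nonneg _ (by exact_mod_cast Nat.zero_le m)
  calc ((carQuot m a : ℤ) : ZMod m) = ((L / n : ℕ) : ZMod m) * φ u := hφ
  _ = ((L / n : ℕ) : ZMod m) * ∑ r ∈ S,
        ((a * (r : ℤ) : ℤ) : ZMod m)⁻¹ * (((a * (r : ℤ)).fdiv (m : ℤ) : ℤ) : ZMod m) := by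
      rw [hφu]
      congr 1
      refine Finset.sum_congr rfl (fun r hr => ?_)
      rw [hfd]
end

section
/- Let m ≥ 2 be an integer, a ≥ 1 an integer with gcd(a, m) = 1, and let n = ord_m(a) be the multiplicative order of a modulo m. Then C_m(a) ≡ −λ(m) · (a·n)⁻¹ · Σ_{k=0}^{a−1} Σ_{r=1, r ∈ ⟨a⟩}^{⌊k·m/a⌋} r^{λ(m)−1} (mod m), where the inner sum is over integers r with 1 ≤ r ≤ ⌊k·m/a⌋ whose residue class lies in the subgroup ⟨a⟩ of (ℤ/mℤ)* generated by a, and (a·n)⁻¹ denotes a multiplicative inverse of a·n modulo m. -/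
lemma add_pow_modEq_sq (x y : ℤ) : ∀ n : ℕ, (x + y)^n ≡ x^n + n * x^(n-1) * y [ZMOD y^2]
  | 0 => by simp
  | 1 => by simpa using Int.ModEq.refl _
  | (k+2) => by
      calc (x+y)^(k+2) = (x+y)^(k+1) * (x+y) := by ring
        _ ≡ (x^(k+1) + (k+1) * x^k * y) * (x+y) [ZMOD y^2] := by
            have h := add_pow_modEq_sq x y (k+1)
            simpa using h.mul_right (x+y)
        _ ≡ x^(k+2) + (k+2) * x^(k+1) * y [ZMOD y^2] := by
            have h : ((x^(k+1) + (k+1) * x^k * y) * (x+y)) - (x^(k+2) + (k+2) * x^(k+1) * y)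
                = (k+1) * x^k * y^2 := by push_cast; ring
            exact (Int.modEq_iff_dvd.mpr ⟨-((k+1) * x^k), by linarith [h]⟩)
        _ = x^(k+2) + ((k+2:ℕ)) * x^(k+2-1) * y := by push_cast; ring

lemma cancel_m {m x y : ℤ} (hm : m ≠ 0) (h : m * x ≡ m * y [ZMOD m^2]) : x ≡ y [ZMOD m] := by
  rw [Int.modEq_iff_dvd] at h ⊢
  have h2 : m * m ∣ m * (y - x) := by
    have h3 : m * y - m * x = m * (y - x) := by ring
    rw [← h3]; simpa [pow_two] using h
  exact (mul_dvd_mul_iff_left hm).mp h2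

open scoped Classical in
lemma card_reps (m a : ℕ) (hm : 2 ≤ m) (ha : Nat.gcd a m = 1) :
    ((Finset.Icc 1 (m-1)).filter
      (fun r => ∃ j : ℕ, ((r : ℕ) : ZMod m) = ((a : ℕ) : ZMod m) ^ j)).card
      = orderOf ((a : ZMod m)) := by
  haveI : NeZero m := ⟨by omega⟩
  haveI : Fact (1 < m) := ⟨by omega⟩
  set A : ZMod m := (a : ZMod m) with hA
  set u : (ZMod m)ˣ := ZMod.unitOfCoprime a ha with hu
  have hua : (u : ZMod m) = A := ZMod.coe_unitOfCoprime a ha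
  -- first: card of R = card of S where S is the filter in ZMod m
  set S : Finset (ZMod m) := Finset.univ.filter (fun x => ∃ j : ℕ, x = A ^ j) with hS
  have h1 : ((Finset.Icc 1 (m-1)).filter
      (fun r => ∃ j : ℕ, ((r : ℕ) : ZMod m) = A ^ j)).card = S.card := by
    apply Finset.card_bij (fun r _ => ((r : ℕ) : ZMod m))
    · intro r hr
      simp only [Finset.mem_filter] at hr
      simp only [hS, Finset.mem_filter]
      exact ⟨Finset.mem_univ _, hr.2⟩
    · intro r hr r' hr' h
      simp only [Finset.mem_filter, Finset.mem_Icc] at hr hr'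
      have hrm : r < m := by omega
      have hrm' : r' < m := by omega
      have := congrArg ZMod.val h
      rwa [ZMod.val_cast_of_lt hrm, ZMod.val_cast_of_lt hrm'] at this
    · intro x hx
      simp only [hS, Finset.mem_filter] at hx
      obtain ⟨-, j, hj⟩ := hx
      refine ⟨x.val, ?_, ?_⟩
      · simp only [Finset.mem_filter, Finset.mem_Icc]
        have hxu : IsUnit x := by
          rw [hj, ← hua, ← Units.val_pow_eq_pow_val]; exact Units.isUnit _
        have hx0 : x ≠ 0 := hxu.ne_zero
        have : x.val ≠ 0 := fun h0 => hx0 ((ZMod.val_eq_zero x).mp h0)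
        refine ⟨⟨by omega, by have := ZMod.val_lt x; omega⟩, j, ?_⟩
        rw [ZMod.natCast_rightInverse x]; exact hj
      · exact ZMod.natCast_rightInverse x
  rw [h1]
  -- second: card S = orderOf A
  have h2 : S = Finset.univ.filter (fun x : ZMod m => ∃ v : (ZMod m)ˣ,
      v ∈ Subgroup.zpowers u ∧ (v : ZMod m) = x) := by
    ext x
    simp only [hS, Finset.mem_filter, Finset.mem_univ, true_and]
    constructor
    · rintro ⟨j, rfl⟩
      exact ⟨u ^ j, mem_powers_iff_mem_zpowers.mp ⟨j, rfl⟩, by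
        rw [Units.val_pow_eq_pow_val, hua]⟩
    · rintro ⟨v, hv, rfl⟩
      obtain ⟨j, rfl⟩ := mem_powers_iff_mem_zpowers.mpr hv
      exact ⟨j, by rw [Units.val_pow_eq_pow_val, hua]⟩
  have hord : orderOf A = orderOf u := by rw [← hua, orderOf_units]
  rw [h2, hord, ← Fintype.card_zpowers (x := u)]
  rw [Fintype.card_eq_nat_card, ← Nat.card_eq_finsetCard]
  symm
  apply Nat.card_eq_of_bijective (fun v : Subgroup.zpowers u =>
    ⟨(v : (ZMod m)ˣ), by simp only [Finset.mem_filter, Finset.mem_univ, true_and]; exact ⟨v, v.2, rfl⟩⟩)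
  constructor
  · intro v w h
    simp only [Subtype.mk.injEq] at h
    exact Subtype.ext (Units.ext h)
  · rintro ⟨x, hx⟩
    simp only [Finset.mem_filter, Finset.mem_univ, true_and] at hx
    obtain ⟨v, hv, rfl⟩ := hx
    exact ⟨⟨v, hv⟩, rfl⟩

open scoped Classical in
lemma swap_sum (m a L : ℕ) (hm : 2 ≤ m) (ha1 : 1 ≤ a) (ha : Nat.gcd a m = 1) :
    ∑ k ∈ Finset.range a,
      ∑ r ∈ (Finset.Icc 1 (k * m / a)).filter
          (fun r => ∃ j : ℕ, ((r : ℕ) : ZMod m) = ((a : ℕ) : ZMod m) ^ j),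
        (r : ℤ) ^ (L - 1)
    = ∑ r ∈ (Finset.Icc 1 (m-1)).filter
          (fun r => ∃ j : ℕ, ((r : ℕ) : ZMod m) = ((a : ℕ) : ZMod m) ^ j),
        ((a:ℤ) - 1 - ((a * r / m : ℕ) : ℤ)) * (r : ℤ) ^ (L - 1) := by
  haveI : NeZero m := ⟨by omega⟩
  have hm0 : 0 < m := by omega
  have ha0 : 0 < a := ha1
  set P : ℕ → Prop := fun r => ∃ j : ℕ, ((r : ℕ) : ZMod m) = ((a : ℕ) : ZMod m) ^ j with hP
  have hPco : ∀ r : ℕ, P r → Nat.Coprime r m := by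
    intro r hr
    obtain ⟨j, hj⟩ := hr
    have hA : IsUnit ((a : ZMod m)) := (ZMod.isUnit_iff_coprime a m).mpr ha
    have : IsUnit ((r : ZMod m)) := hj ▸ hA.pow j
    exact (ZMod.isUnit_iff_coprime r m).mp this
  -- rewrite inner filters
  have hinner : ∀ k ∈ Finset.range a,
      (Finset.Icc 1 (k * m / a)).filter P
        = ((Finset.Icc 1 (m-1)).filter P).filter (fun r => r ≤ k * m / a) := by
    intro k hk
    rw [Finset.mem_range] at hk
    ext r
    simp only [Finset.mem_filter, Finset.mem_Icc]
    have hbound : k * m / a ≤ m - 1 := by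
      have : k * m / a < m := by
        rw [Nat.div_lt_iff_lt_mul ha0]
        calc k * m < a * m := Nat.mul_lt_mul_of_pos_right hk hm0
          _ = m * a := Nat.mul_comm a m
      omega
    constructor
    · rintro ⟨⟨h1, h2⟩, h3⟩
      exact ⟨⟨⟨h1, le_trans h2 hbound⟩, h3⟩, h2⟩
    · rintro ⟨⟨⟨h1, _⟩, h3⟩, h2⟩
      exact ⟨⟨h1, h2⟩, h3⟩
  rw [Finset.sum_congr rfl (fun k hk => by rw [hinner k hk, Finset.sum_filter])]
  rw [Finset.sum_comm]
  apply Finset.sum_congr rfl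
  intro r hr
  simp only [Finset.mem_filter, Finset.mem_Icc] at hr
  obtain ⟨⟨hr1, hr2⟩, hrP⟩ := hr
  have hrco : Nat.Coprime r m := hPco r hrP
  have hndvd : ¬ (m ∣ a * r) := by
    intro hdvd
    have hco : Nat.gcd (a * r) m = 1 := (Nat.coprime_mul_iff_left).mpr ⟨ha, hrco⟩
    have h2 : m ∣ Nat.gcd (a * r) m := Nat.dvd_gcd hdvd dvd_rfl
    rw [hco] at h2
    exact absurd (Nat.dvd_one.mp h2) (by omega)
  have hfilter : (Finset.range a).filter (fun k => r ≤ k * m / a)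
      = Finset.Ico (a * r / m + 1) a := by
    ext k
    simp only [Finset.mem_filter, Finset.mem_range, Finset.mem_Ico]
    have h1 : r ≤ k * m / a ↔ r * a ≤ k * m := Nat.le_div_iff_mul_le ha0
    have h2 : a * r / m < k ↔ a * r < k * m := Nat.div_lt_iff_lt_mul hm0
    have hne : a * r ≠ k * m := fun h => hndvd (h ▸ Dvd.intro k (by ring))
    have hcomm : a * r = r * a := Nat.mul_comm a r
    constructor
    · rintro ⟨hk, hle⟩
      rw [h1] at hle
      have hlt' : a * r < k * m := by omega
      have := h2.mpr hlt'
      exact ⟨by omega, hk⟩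
    · rintro ⟨hge, hk⟩
      refine ⟨hk, ?_⟩
      rw [h1]
      have : a * r < k * m := h2.mp (by omega)
      omega
  rw [← Finset.sum_filter, hfilter, Finset.sum_const, Nat.card_Ico, nsmul_eq_mul]
  have hlt : a * r / m < a := by
    rw [Nat.div_lt_iff_lt_mul hm0]
    calc a * r ≤ a * (m - 1) := Nat.mul_le_mul_left a hr2
      _ < a * m := by
        have : 0 < a * 1 := by omega
        calc a * (m-1) < a * (m-1) + a := by omega
          _ = a * m := by rw [← Nat.mul_succ]; congr 1; omega
  push_cast [Nat.cast_sub (by omega : a * r / m + 1 ≤ a)]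
  ring

open scoped Classical in
theorem stmt9 (m : ℕ) (hm : 2 ≤ m) (a : ℕ) (ha1 : 1 ≤ a) (ha : Nat.gcd a m = 1)
    (n : ℕ) (hn : n = orderOf ((a : ZMod m)))
    (b : ℤ) (hb : ((a * n : ℕ) : ℤ) * b ≡ 1 [ZMOD (m : ℤ)]) :
    carQuot m a ≡
      -(carmichael m : ℤ) * b *
        ∑ k ∈ Finset.range a,
          ∑ r ∈ (Finset.Icc 1 (k * m / a)).filter
              (fun r => ∃ j : ℕ, ((r : ℕ) : ZMod m) = ((a : ℕ) : ZMod m) ^ j),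
            (r : ℤ) ^ (carmichael m - 1) [ZMOD (m : ℤ)] := by
  haveI : NeZero m := ⟨by omega⟩
  haveI : Fact (1 < m) := ⟨by omega⟩
  have hm0 : 0 < m := by omega
  set L := carmichael m with hLdef
  -- basic properties of the Carmichael function
  have hLmem : 0 < L ∧ ∀ x : ℤ, Int.gcd x (m:ℤ) = 1 → x ^ L ≡ 1 [ZMOD (m:ℤ)] := by
    have hNE : {n : ℕ | 0 < n ∧ ∀ x : ℤ, Int.gcd x (m:ℤ) = 1 →
        x ^ n ≡ 1 [ZMOD (m:ℤ)]}.Nonempty := by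
      refine ⟨Fintype.card (ZMod m)ˣ, Fintype.card_pos, ?_⟩
      intro x hx
      have hu : IsUnit ((x : ZMod m)) := by
        obtain ⟨u, v, huv⟩ := Int.isCoprime_iff_gcd_eq_one.mpr hx
        apply IsUnit.of_mul_eq_one ((u : ZMod m))
        have h := congrArg (fun z : ℤ => ((z : ZMod m))) huv
        push_cast at h
        simpa [ZMod.natCast_self, mul_comm] using h
      obtain ⟨w, hw⟩ := hu
      rw [← ZMod.intCast_eq_intCast_iff]
      push_cast
      rw [← hw, ← Units.val_pow_eq_pow_val, pow_card_eq_one, Units.val_one]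
    simpa [hLdef, carmichael] using Nat.sInf_mem hNE
  obtain ⟨hL0, hLpow⟩ := hLmem
  have hZ : ∀ x : ZMod m, IsUnit x → x ^ L = 1 := by
    rintro x ⟨u, rfl⟩
    have hco := ZMod.val_coe_unit_coprime u
    have h := hLpow (((u : ZMod m).val : ℕ) : ℤ)
      (by rw [Int.gcd_natCast_natCast]; exact hco)
    rw [← ZMod.intCast_eq_intCast_iff] at h
    push_cast at h
    rwa [ZMod.natCast_rightInverse ((u : ZMod m))] at h
  have hAunit : IsUnit ((a : ZMod m)) := (ZMod.isUnit_iff_coprime a m).mpr ha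
  have hAL : ((a : ZMod m)) ^ L = 1 := hZ _ hAunit
  have hA1 : ((a : ZMod m)) ^ (L-1) * (a : ZMod m) = 1 := by
    rw [← pow_succ]
    have h : L - 1 + 1 = L := by omega
    rw [h, hAL]
  set R := (Finset.Icc 1 (m-1)).filter
      (fun r => ∃ j : ℕ, ((r : ℕ) : ZMod m) = ((a : ℕ) : ZMod m) ^ j) with hRdef
  have hcopR : ∀ r ∈ R, Nat.Coprime r m := by
    intro r hr
    rw [hRdef, Finset.mem_filter] at hr
    obtain ⟨-, j, hj⟩ := hr
    have h : IsUnit ((r : ZMod m)) := hj ▸ hAunit.pow j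
    exact (ZMod.isUnit_iff_coprime r m).mp h
  have hmemR : ∀ r ∈ R, 1 ≤ r ∧ r ≤ m - 1 := by
    intro r hr
    rw [hRdef, Finset.mem_filter, Finset.mem_Icc] at hr
    exact hr.1
  -- closure under multiplication by a power of a
  have hstep : ∀ c r : ℕ, Nat.Coprime c m → (∃ i : ℕ, ((c : ZMod m)) = ((a : ZMod m))^i) →
      r ∈ R → (c * r % m) ∈ R := by
    intro c r hc hi hr
    obtain ⟨i, hci⟩ := hi
    obtain ⟨j, hj⟩ : ∃ j : ℕ, ((r : ℕ) : ZMod m) = ((a : ℕ) : ZMod m) ^ j := by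
      rw [hRdef, Finset.mem_filter] at hr; exact hr.2
    have hco : Nat.Coprime (c * r) m := Nat.Coprime.mul hc (hcopR r hr)
    have hne : c * r % m ≠ 0 := by
      intro h0
      have hdvd : m ∣ c * r := Nat.dvd_of_mod_eq_zero h0
      have h2 : m ∣ Nat.gcd (c * r) m := Nat.dvd_gcd hdvd dvd_rfl
      rw [hco] at h2
      exact absurd (Nat.dvd_one.mp h2) (by omega)
    rw [hRdef, Finset.mem_filter, Finset.mem_Icc]
    refine ⟨⟨by omega, by have := Nat.mod_lt (c * r) hm0; omega⟩, i + j, ?_⟩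
    rw [ZMod.natCast_mod]
    push_cast
    rw [hci, hj, pow_add]
  have hsR : ∀ r ∈ R, a * r % m ∈ R := fun r hr =>
    hstep a r ha ⟨1, by rw [pow_one]⟩ hr
  have htR : ∀ r ∈ R, a^(L-1) * r % m ∈ R := fun r hr =>
    hstep _ r (Nat.Coprime.pow_left _ ha) ⟨L-1, by push_cast; ring⟩ hr
  have hnat_eq : ∀ x y : ℕ, x < m → y < m → ((x : ZMod m) = (y : ZMod m)) → x = y := by
    intro x y hx hy h
    rw [← ZMod.val_cast_of_lt hx, ← ZMod.val_cast_of_lt hy, h]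
  have hts : ∀ r ∈ R, a^(L-1) * (a * r % m) % m = r := by
    intro r hr
    have hrm : r < m := by have := hmemR r hr; omega
    apply hnat_eq _ _ (Nat.mod_lt _ hm0) hrm
    rw [ZMod.natCast_mod]
    push_cast
    rw [ZMod.natCast_mod]
    push_cast
    calc ((a:ZMod m))^(L-1) * ((a:ZMod m) * (r:ZMod m))
        = ((a:ZMod m))^(L-1) * (a:ZMod m) * (r:ZMod m) := by ring
      _ = (r : ZMod m) := by rw [hA1, one_mul]
  have hst : ∀ r ∈ R, a * (a^(L-1) * r % m) % m = r := by
    intro r hr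
    have hrm : r < m := by have := hmemR r hr; omega
    apply hnat_eq _ _ (Nat.mod_lt _ hm0) hrm
    rw [ZMod.natCast_mod]
    push_cast
    rw [ZMod.natCast_mod]
    push_cast
    calc ((a:ZMod m)) * (((a:ZMod m))^(L-1) * (r:ZMod m))
        = ((a:ZMod m))^(L-1) * (a:ZMod m) * (r:ZMod m) := by ring
      _ = (r : ZMod m) := by rw [hA1, one_mul]
  have hsum : ∀ g : ℕ → ℤ, ∑ r ∈ R, g (a * r % m) = ∑ r ∈ R, g r := by
    intro g
    exact Finset.sum_nbij' (fun r => a * r % m) (fun r => a^(L-1) * r % m)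
      hsR htR hts hst (fun r hr => rfl)
  -- integer facts
  have hCdvd : (m:ℤ) ∣ ((a:ℕ):ℤ)^L - 1 := by
    have h := hLpow ((a:ℕ):ℤ) (by rw [Int.gcd_natCast_natCast]; exact ha)
    have h2 := h.dvd
    have h3 := dvd_neg.mpr h2
    rwa [neg_sub] at h3
  have hC : ((a:ℕ):ℤ)^L - 1 = (m:ℤ) * carQuot m ((a:ℕ):ℤ) := by
    rw [carQuot, ← hLdef]
    exact (Int.mul_ediv_cancel' hCdvd).symm
  -- per-element congruence mod m^2
  have hterm : ∀ r ∈ R, ((a:ℤ) * (r:ℤ))^L ≡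
      ((a*r % m : ℕ):ℤ)^L + (L:ℤ) * (m:ℤ) * ((a*r/m : ℕ):ℤ) * ((a:ℤ)*(r:ℤ))^(L-1)
      [ZMOD (m:ℤ)^2] := by
    intro r hr
    set x : ℤ := ((a*r % m : ℕ):ℤ) with hxdef
    set y : ℤ := (m:ℤ) * ((a*r/m : ℕ):ℤ) with hydef
    have hxy : x + y = (a:ℤ)*(r:ℤ) := by
      have h0 : m * (a*r/m) + a*r%m = a*r := Nat.div_add_mod (a*r) m
      rw [hxdef, hydef]
      calc ((a*r % m : ℕ):ℤ) + (m:ℤ) * ((a*r/m : ℕ):ℤ)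
          = ((m * (a*r/m) + a*r%m : ℕ) : ℤ) := by push_cast; ring
        _ = ((a*r : ℕ) : ℤ) := by rw [h0]
        _ = (a:ℤ)*(r:ℤ) := by push_cast; ring
    have h1 : ((a:ℤ)*(r:ℤ))^L ≡ x^L + (L:ℤ) * x^(L-1) * y [ZMOD (m:ℤ)^2] := by
      have h1' := add_pow_modEq_sq x y L
      rw [hxy] at h1'
      exact h1'.of_dvd ⟨((a*r/m:ℕ):ℤ)^2, by rw [hydef]; ring⟩
    have hx : x ≡ (a:ℤ)*(r:ℤ) [ZMOD (m:ℤ)] := by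
      rw [hxdef, Int.natCast_mod]
      push_cast
      exact (Int.emod_emod_of_dvd _ dvd_rfl : ((a:ℤ)*(r:ℤ)) % (m:ℤ) % (m:ℤ) = _)
    have hpow := hx.pow (L-1)
    have h3 : (L:ℤ) * x^(L-1) * y ≡ (L:ℤ) * (m:ℤ) * ((a*r/m:ℕ):ℤ) * ((a:ℤ)*(r:ℤ))^(L-1)
        [ZMOD (m:ℤ)^2] := by
      have h4 := (hpow.mul_left ((L:ℤ) * ((a*r/m:ℕ):ℤ))).mul_left' (c := (m:ℤ))
      calc (L:ℤ) * x^(L-1) * y = (m:ℤ) * ((L:ℤ) * ((a*r/m:ℕ):ℤ) * x^(L-1)) := by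
            rw [hydef]; ring
        _ ≡ (m:ℤ) * ((L:ℤ) * ((a*r/m:ℕ):ℤ) * ((a:ℤ)*(r:ℤ))^(L-1)) [ZMOD (m:ℤ)^2] := by
            rw [pow_two]; exact h4
        _ = (L:ℤ) * (m:ℤ) * ((a*r/m:ℕ):ℤ) * ((a:ℤ)*(r:ℤ))^(L-1) := by ring
    exact h1.trans ((Int.ModEq.refl (x^L)).add h3)
  -- summed congruence mod m^2
  have hsum2 : (a:ℤ)^L * (∑ r ∈ R, (r:ℤ)^L) ≡
      (∑ r ∈ R, (r:ℤ)^L) + (L:ℤ) * (m:ℤ) * ∑ r ∈ R, ((a*r/m : ℕ):ℤ) * ((a:ℤ)*(r:ℤ))^(L-1)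
      [ZMOD (m:ℤ)^2] := by
    have e1 : (a:ℤ)^L * ∑ r ∈ R, (r:ℤ)^L = ∑ r ∈ R, ((a:ℤ)*(r:ℤ))^L := by
      rw [Finset.mul_sum]
      exact Finset.sum_congr rfl (fun r _ => by rw [mul_pow])
    have e2 : ∑ r ∈ R, ((a*r%m:ℕ):ℤ)^L = ∑ r ∈ R, (r:ℤ)^L :=
      hsum (fun z => (z:ℤ)^L)
    rw [e1]
    have hdvd : (m:ℤ)^2 ∣ (∑ r ∈ R, (((a*r%m:ℕ):ℤ)^L + (L:ℤ)*(m:ℤ)*((a*r/m:ℕ):ℤ)*((a:ℤ)*(r:ℤ))^(L-1))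
        - ∑ r ∈ R, ((a:ℤ)*(r:ℤ))^L) := by
      rw [← Finset.sum_sub_distrib]
      exact Finset.dvd_sum (fun r hr => (hterm r hr).dvd)
    have h5 := Int.modEq_iff_dvd.mpr hdvd
    calc ∑ r ∈ R, ((a:ℤ)*(r:ℤ))^L
        ≡ ∑ r ∈ R, (((a*r%m:ℕ):ℤ)^L + (L:ℤ)*(m:ℤ)*((a*r/m:ℕ):ℤ)*((a:ℤ)*(r:ℤ))^(L-1))
          [ZMOD (m:ℤ)^2] := h5
      _ = (∑ r ∈ R, (r:ℤ)^L) + (L:ℤ)*(m:ℤ)* ∑ r ∈ R, ((a*r/m:ℕ):ℤ)*((a:ℤ)*(r:ℤ))^(L-1) := by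
          rw [Finset.sum_add_distrib, e2, Finset.mul_sum]
          congr 1
          exact Finset.sum_congr rfl (fun r _ => by ring)
  have hQa : ∑ r ∈ R, ((a*r/m:ℕ):ℤ)*((a:ℤ)*(r:ℤ))^(L-1)
      = (a:ℤ)^(L-1) * ∑ r ∈ R, ((a*r/m:ℕ):ℤ)*(r:ℤ)^(L-1) := by
    rw [Finset.mul_sum]
    exact Finset.sum_congr rfl (fun r _ => by rw [mul_pow]; ring)
  have hkey : carQuot m ((a:ℕ):ℤ) * (∑ r ∈ R, (r:ℤ)^L) ≡
      (L:ℤ) * ((a:ℤ)^(L-1) * ∑ r ∈ R, ((a*r/m:ℕ):ℤ)*(r:ℤ)^(L-1)) [ZMOD (m:ℤ)] := by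
    apply cancel_m (show (m:ℤ) ≠ 0 by exact_mod_cast (by omega : m ≠ 0))
    calc (m:ℤ) * (carQuot m ((a:ℕ):ℤ) * ∑ r ∈ R, (r:ℤ)^L)
        = ((a:ℤ)^L - 1) * ∑ r ∈ R, (r:ℤ)^L := by rw [hC]; ring
      _ = (a:ℤ)^L * (∑ r ∈ R, (r:ℤ)^L) - ∑ r ∈ R, (r:ℤ)^L := by ring
      _ ≡ ((∑ r ∈ R, (r:ℤ)^L) + (L:ℤ)*(m:ℤ)* ∑ r ∈ R, ((a*r/m:ℕ):ℤ)*((a:ℤ)*(r:ℤ))^(L-1))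
            - ∑ r ∈ R, (r:ℤ)^L [ZMOD (m:ℤ)^2] := hsum2.sub_right _
      _ = (L:ℤ)*(m:ℤ)* ∑ r ∈ R, ((a*r/m:ℕ):ℤ)*((a:ℤ)*(r:ℤ))^(L-1) := by ring
      _ = (m:ℤ) * ((L:ℤ) * ((a:ℤ)^(L-1) * ∑ r ∈ R, ((a*r/m:ℕ):ℤ)*(r:ℤ)^(L-1))) := by
          rw [hQa]; ring
  -- cast to ZMod m
  have hS1 : ∑ r ∈ R, ((r:ℕ) : ZMod m)^L = (n : ZMod m) := by
    have h6 : ∀ r ∈ R, ((r:ℕ) : ZMod m)^L = 1 := fun r hr =>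
      hZ _ ((ZMod.isUnit_iff_coprime r m).mpr (hcopR r hr))
    rw [Finset.sum_congr rfl h6, Finset.sum_const, nsmul_eq_mul, mul_one]
    congr 1
    rw [hn, ← card_reps m a hm ha, hRdef]
  have hkeyZ : ((carQuot m ((a:ℕ):ℤ) : ℤ) : ZMod m) * (n : ZMod m)
      = (L : ZMod m) * (((a : ZMod m))^(L-1) *
        ∑ r ∈ R, ((a*r/m : ℕ) : ZMod m) * ((r:ℕ) : ZMod m)^(L-1)) := by
    have h7 := (ZMod.intCast_eq_intCast_iff _ _ _).mpr hkey
    simp only [Int.cast_mul, Int.cast_sum, Int.cast_pow, Int.cast_natCast] at h7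
    rwa [hS1] at h7
  have hTbij : ∑ r ∈ R, ((a*r%m : ℕ):ℤ)^(L-1) = ∑ r ∈ R, (r:ℤ)^(L-1) :=
    hsum (fun z => (z:ℤ)^(L-1))
  have hT2 : ∑ r ∈ R, ((a : ZMod m) * ((r:ℕ):ZMod m))^(L-1)
      = ∑ r ∈ R, ((r:ℕ):ZMod m)^(L-1) := by
    have h8 := congrArg (fun z : ℤ => ((z : ZMod m))) hTbij
    simp only [Int.cast_sum, Int.cast_pow, Int.cast_natCast] at h8
    rw [← h8]
    exact Finset.sum_congr rfl (fun r hr => by rw [ZMod.natCast_mod]; push_cast; ring)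
  have hT3 : ((a:ZMod m))^(L-1) * (∑ r ∈ R, ((r:ℕ):ZMod m)^(L-1))
      = ∑ r ∈ R, ((r:ℕ):ZMod m)^(L-1) := by
    calc ((a:ZMod m))^(L-1) * (∑ r ∈ R, ((r:ℕ):ZMod m)^(L-1))
        = ∑ r ∈ R, ((a : ZMod m) * ((r:ℕ):ZMod m))^(L-1) := by
          rw [Finset.mul_sum]
          exact Finset.sum_congr rfl (fun r _ => (mul_pow _ _ _).symm)
      _ = ∑ r ∈ R, ((r:ℕ):ZMod m)^(L-1) := hT2
  have hAT : ((a:ZMod m) - 1) * (∑ r ∈ R, ((r:ℕ):ZMod m)^(L-1)) = 0 := by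
    have h9 : (a:ZMod m) * (((a:ZMod m))^(L-1) * (∑ r ∈ R, ((r:ℕ):ZMod m)^(L-1)))
        = (a:ZMod m) * (∑ r ∈ R, ((r:ℕ):ZMod m)^(L-1)) := by rw [hT3]
    rw [← mul_assoc, mul_comm ((a:ZMod m)) (((a:ZMod m))^(L-1)), hA1, one_mul] at h9
    rw [sub_mul, one_mul, ← h9, sub_self]
  have hbz : (a : ZMod m) * (n : ZMod m) * ((b : ℤ) : ZMod m) = 1 := by
    have h10 := (ZMod.intCast_eq_intCast_iff _ _ _).mpr hb
    push_cast at h10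
    linear_combination h10
  rw [swap_sum m a L hm ha1 ha]
  rw [← ZMod.intCast_eq_intCast_iff]
  simp only [Int.cast_mul, Int.cast_neg, Int.cast_sum, Int.cast_sub, Int.cast_one,
    Int.cast_pow, Int.cast_natCast]
  have hsplit : ∑ r ∈ R, ((a:ZMod m) - 1 - ((a*r/m : ℕ):ZMod m)) * ((r:ℕ):ZMod m)^(L-1)
      = ((a:ZMod m) - 1) * (∑ r ∈ R, ((r:ℕ):ZMod m)^(L-1))
        - ∑ r ∈ R, ((a*r/m : ℕ):ZMod m) * ((r:ℕ):ZMod m)^(L-1) := by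
    rw [Finset.mul_sum, ← Finset.sum_sub_distrib]
    exact Finset.sum_congr rfl (fun r _ => by ring)
  rw [hsplit, hAT, zero_sub]
  linear_combination (((b:ℤ):ZMod m) * (a:ZMod m)) * hkeyZ
    - ((carQuot m ((a:ℕ):ℤ) : ℤ) : ZMod m) * hbz
    + ((L : ZMod m) * ((b:ℤ):ZMod m) *
        (∑ r ∈ R, ((a*r/m : ℕ):ZMod m) * ((r:ℕ):ZMod m)^(L-1))) * hA1
end

section
/- Let m ≥ 2 be an integer, a ≥ 1 an integer with gcd(a, m) = 1, and let n = ord_m(a) be the multiplicative order of a modulo m. For 0 ≤ k ≤ a−1 put s(k, a) = Σ r^{λ(m)−1}, the sum over integers r with k·m/a < r < (k+1)·m/a whose residue class lies in the subgroup ⟨a⟩ of (ℤ/mℤ)* generated by a. Then C_m(a) ≡ λ(m) · (a·n)⁻¹ · Σ_{k=0}^{a−1} k·s(k, a) (mod m), where (a·n)⁻¹ denotes a multiplicative inverse of a·n modulo m. -/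
private lemma sumModEq {α : Type*} (s : Finset α) (f g : α → ℤ) (N : ℤ)
    (h : ∀ i ∈ s, f i ≡ g i [ZMOD N]) :
    ∑ i ∈ s, f i ≡ ∑ i ∈ s, g i [ZMOD N] := by
  rw [Int.modEq_iff_dvd, ← Finset.sum_sub_distrib]
  exact Finset.dvd_sum fun i hi => Int.ModEq.dvd (h i hi)

private lemma intBinom (x y : ℤ) (l : ℕ) :
    (x + y) ^ (l + 1) ≡ x ^ (l + 1) + ((l : ℤ) + 1) * x ^ l * y [ZMOD y ^ 2] := by
  induction l with
  | zero =>
    have h : x ^ (0 + 1) + (((0 : ℕ) : ℤ) + 1) * x ^ 0 * y = (x + y) ^ (0 + 1) := by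
      push_cast; ring
    rw [← h]
  | succ l ih =>
    have h2 : ((l : ℤ) + 1) * x ^ l * y ^ 2 ≡ 0 [ZMOD y ^ 2] :=
      Int.modEq_zero_iff_dvd.mpr ⟨((l : ℤ) + 1) * x ^ l, by ring⟩
    calc (x + y) ^ (l + 1 + 1) = (x + y) ^ (l + 1) * (x + y) := pow_succ _ _
      _ ≡ (x ^ (l + 1) + ((l : ℤ) + 1) * x ^ l * y) * (x + y) [ZMOD y ^ 2] := ih.mul_right _
      _ = (x ^ (l + 1 + 1) + ((l : ℤ) + 1 + 1) * x ^ (l + 1) * y) + ((l : ℤ) + 1) * x ^ l * y ^ 2 := by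
          ring
      _ ≡ (x ^ (l + 1 + 1) + ((l : ℤ) + 1 + 1) * x ^ (l + 1) * y) + 0 [ZMOD y ^ 2] :=
          (Int.ModEq.refl _).add h2
      _ = x ^ (l + 1 + 1) + ((↑(l + 1) : ℤ) + 1) * x ^ (l + 1) * y := by push_cast; ring

open scoped Classical in
/-- Lerch's formula: with `n = ord_m a` and
`s(k,a) = Σ_{km/a < r < (k+1)m/a, r ∈ ⟨a⟩} r^{λ(m)-1}`
(the condition `km/a < r < (k+1)m/a` on the integer `r` being expressed as
`km < ra` and `ra < (k+1)m`), one has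
`C_m(a) ≡ λ(m)·(an)⁻¹·Σ_{k=0}^{a-1} k·s(k,a) (mod m)`. -/
theorem stmt10 (m : ℕ) (hm : 2 ≤ m) (a : ℕ) (ha1 : 1 ≤ a) (ha : Nat.gcd a m = 1)
    (n : ℕ) (hn : n = orderOf ((a : ZMod m)))
    (b : ℤ) (hb : ((a * n : ℕ) : ℤ) * b ≡ 1 [ZMOD (m : ℤ)]) :
    carQuot m a ≡
      (carmichael m : ℤ) * b *
        ∑ k ∈ Finset.range a, (k : ℤ) *
          ∑ r ∈ (Finset.range m).filter
              (fun r => k * m < r * a ∧ r * a < (k + 1) * m ∧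
                ∃ j : ℕ, ((r : ℕ) : ZMod m) = ((a : ℕ) : ZMod m) ^ j),
            (r : ℤ) ^ (carmichael m - 1) [ZMOD (m : ℤ)] := by
  haveI : NeZero m := ⟨by omega⟩
  have hm0 : 0 < m := by omega
  set L := carmichael m with hLdef
  -- properties of L
  have hφ : 0 < Nat.totient m ∧
      ∀ c : ℤ, Int.gcd c (m : ℤ) = 1 → c ^ Nat.totient m ≡ 1 [ZMOD (m : ℤ)] := by
    refine ⟨Nat.totient_pos.mpr hm0, fun c hc => ?_⟩
    obtain ⟨u, v, huv⟩ := Int.isCoprime_iff_gcd_eq_one.mpr hc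
    have h1 : (c : ZMod m) * (u : ZMod m) = 1 := by
      have h := congrArg (fun z : ℤ => (z : ZMod m)) huv
      push_cast at h
      simpa [ZMod.natCast_self, mul_comm] using h
    obtain ⟨w, hw⟩ := IsUnit.of_mul_eq_one _ h1
    have h2 : ((c ^ Nat.totient m : ℤ) : ZMod m) = ((1 : ℤ) : ZMod m) := by
      push_cast
      rw [← hw, ← Units.val_pow_eq_pow_val, ZMod.pow_totient, Units.val_one]
    exact (ZMod.intCast_eq_intCast_iff _ _ _).mp h2
  have hmemL : 0 < L ∧ ∀ c : ℤ, Int.gcd c (m : ℤ) = 1 → c ^ L ≡ 1 [ZMOD (m : ℤ)] := by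
    have hne : {n : ℕ | 0 < n ∧ ∀ c : ℤ, Int.gcd c (m : ℤ) = 1 →
        c ^ n ≡ 1 [ZMOD (m : ℤ)]}.Nonempty := ⟨Nat.totient m, hφ⟩
    rw [hLdef, carmichael]
    exact Nat.sInf_mem hne
  obtain ⟨hL0, hLpow⟩ := hmemL
  have hacop : Int.gcd ((a : ℕ) : ℤ) (m : ℤ) = 1 := by
    rw [Int.gcd_natCast_natCast]; exact ha
  have haU : IsUnit ((a : ZMod m)) := (ZMod.isUnit_iff_coprime a m).mpr ha
  have haL : ((a : ℕ) : ZMod m) ^ L = 1 := by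
    have h := (ZMod.intCast_eq_intCast_iff _ _ _).mpr (hLpow (a : ℤ) hacop)
    push_cast at h
    exact h
  have hn0 : 0 < n := by
    obtain ⟨w, hw⟩ := haU
    rw [hn, ← hw, orderOf_units]
    exact orderOf_pos w
  -- the subgroup set
  set S : Finset ℕ := (Finset.range m).filter
      (fun r => ∃ j : ℕ, ((r : ℕ) : ZMod m) = ((a : ℕ) : ZMod m) ^ j) with hS
  have hScop : ∀ r ∈ S, Nat.Coprime r m := by
    intro r hr
    rw [hS, Finset.mem_filter] at hr
    obtain ⟨hrm, j, hj⟩ := hr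
    have : IsUnit ((r : ZMod m)) := by rw [hj]; exact haU.pow j
    exact (ZMod.isUnit_iff_coprime r m).mp this
  have hSndvd : ∀ r ∈ S, ¬ (m ∣ r * a) := by
    intro r hr hdvd
    have hcop : Nat.Coprime (r * a) m := Nat.Coprime.mul (hScop r hr) ha
    have h := Nat.dvd_gcd hdvd (dvd_refl m)
    rw [hcop] at h
    have := Nat.le_of_dvd one_pos h
    omega
  -- characterization of the fiber
  have key_r : ∀ r ∈ S, ∀ k : ℕ, (k * m < r * a ∧ r * a < (k + 1) * m) ↔ r * a / m = k := by
    intro r hr k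
    constructor
    · rintro ⟨h1, h2⟩
      have hlo : k ≤ r * a / m := (Nat.le_div_iff_mul_le hm0).mpr (le_of_lt h1)
      have hhi : r * a / m < k + 1 := (Nat.div_lt_iff_lt_mul hm0).mpr h2
      omega
    · intro hk
      subst hk
      constructor
      · have hle : (r * a / m) * m ≤ r * a := Nat.div_mul_le_self _ _
        rcases lt_or_eq_of_le hle with h | h
        · exact h
        · exact absurd ⟨r * a / m, h.symm.trans (mul_comm _ _)⟩ (hSndvd r hr)
      · have hmod := Nat.mod_add_div (r * a) m
        have hmlt := Nat.mod_lt (r * a) hm0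
        calc r * a = r * a % m + m * (r * a / m) := hmod.symm
          _ < m + m * (r * a / m) := by omega
          _ = (r * a / m + 1) * m := by ring
  -- step A : double sum = single sum over S
  have hDouble :
      (∑ k ∈ Finset.range a, (k : ℤ) *
          ∑ r ∈ (Finset.range m).filter
              (fun r => k * m < r * a ∧ r * a < (k + 1) * m ∧
                ∃ j : ℕ, ((r : ℕ) : ZMod m) = ((a : ℕ) : ZMod m) ^ j),
            (r : ℤ) ^ (L - 1))
        = ∑ r ∈ S, ((r * a / m : ℕ) : ℤ) * (r : ℤ) ^ (L - 1) := by
    have hsets : ∀ k : ℕ, (Finset.range m).filter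
        (fun r => k * m < r * a ∧ r * a < (k + 1) * m ∧
          ∃ j : ℕ, ((r : ℕ) : ZMod m) = ((a : ℕ) : ZMod m) ^ j)
        = S.filter (fun r => r * a / m = k) := by
      intro k
      rw [hS, Finset.filter_filter]
      apply Finset.filter_congr
      intro r hrm
      constructor
      · rintro ⟨h1, h2, hp⟩
        have hrS : r ∈ S := by rw [hS]; exact Finset.mem_filter.mpr ⟨hrm, hp⟩
        exact ⟨hp, (key_r r hrS k).mp ⟨h1, h2⟩⟩
      · rintro ⟨hp, hkey⟩
        have hrS : r ∈ S := by rw [hS]; exact Finset.mem_filter.mpr ⟨hrm, hp⟩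
        obtain ⟨h1, h2⟩ := (key_r r hrS k).mpr hkey
        exact ⟨h1, h2, hp⟩
    have hmaps : ∀ r ∈ S, r * a / m ∈ Finset.range a := by
      intro r hr
      rw [hS, Finset.mem_filter, Finset.mem_range] at hr
      rw [Finset.mem_range, Nat.div_lt_iff_lt_mul hm0, mul_comm a m]
      exact Nat.mul_lt_mul_of_pos_right hr.1 (by omega)
    calc (∑ k ∈ Finset.range a, (k : ℤ) *
          ∑ r ∈ (Finset.range m).filter
              (fun r => k * m < r * a ∧ r * a < (k + 1) * m ∧
                ∃ j : ℕ, ((r : ℕ) : ZMod m) = ((a : ℕ) : ZMod m) ^ j),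
            (r : ℤ) ^ (L - 1))
        = ∑ k ∈ Finset.range a, ∑ r ∈ S.filter (fun r => r * a / m = k),
            ((r * a / m : ℕ) : ℤ) * (r : ℤ) ^ (L - 1) := by
          apply Finset.sum_congr rfl
          intro k _
          rw [hsets k, Finset.mul_sum]
          apply Finset.sum_congr rfl
          intro r hr
          rw [Finset.mem_filter] at hr
          rw [hr.2]
      _ = ∑ r ∈ S, ((r * a / m : ℕ) : ℤ) * (r : ℤ) ^ (L - 1) :=
          Finset.sum_fiberwise_of_maps_to hmaps _
  -- injectivity of r ↦ r*a % m on S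
  have hinj : ∀ x ∈ S, ∀ y ∈ S, x * a % m = y * a % m → x = y := by
    intro x hx y hy hxy
    rw [hS, Finset.mem_filter, Finset.mem_range] at hx hy
    have h1 : ((x * a % m : ℕ) : ZMod m) = ((y * a % m : ℕ) : ZMod m) := by rw [hxy]
    rw [ZMod.natCast_mod, ZMod.natCast_mod, Nat.cast_mul, Nat.cast_mul] at h1
    have h2 : ((x : ℕ) : ZMod m) = ((y : ℕ) : ZMod m) := haU.mul_right_cancel h1
    have := congrArg ZMod.val h2
    rwa [ZMod.val_cast_of_lt hx.1, ZMod.val_cast_of_lt hy.1] at this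
  -- image of S under r ↦ r*a % m is S
  have himg : Finset.image (fun r => r * a % m) S = S := by
    apply Finset.eq_of_subset_of_card_le
    · intro x hx
      rw [Finset.mem_image] at hx
      obtain ⟨r, hr, rfl⟩ := hx
      rw [hS, Finset.mem_filter] at hr ⊢
      obtain ⟨hrm, j, hj⟩ := hr
      refine ⟨Finset.mem_range.mpr (Nat.mod_lt _ hm0), j + 1, ?_⟩
      rw [ZMod.natCast_mod, Nat.cast_mul, hj, pow_succ]
    · refine le_of_eq (Finset.card_image_of_injOn ?_).symm
      intro x hx y hy hxy
      exact hinj x (Finset.mem_coe.mp hx) y (Finset.mem_coe.mp hy) hxy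
  -- permutation identity
  have hbij : ∑ r ∈ S, ((r * a % m : ℕ) : ℤ) ^ L = ∑ r ∈ S, (r : ℤ) ^ L := by
    have h := Finset.sum_image (f := fun x : ℕ => ((x : ℕ) : ℤ) ^ L)
      (s := S) (g := fun r => r * a % m) hinj
    rw [himg] at h
    exact h.symm
  -- cardinality of S
  have hcard : S.card = n := by
    have hT : ((Finset.range n).image (fun j => ((a : ℕ) : ZMod m) ^ j)).card = n := by
      rw [Finset.card_image_of_injOn, Finset.card_range]
      intro i hi j hj hij
      refine pow_injOn_Iio_orderOf ?_ ?_ hij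
      · rw [← hn]; exact Set.mem_Iio.mpr (Finset.mem_range.mp (Finset.mem_coe.mp hi))
      · rw [← hn]; exact Set.mem_Iio.mpr (Finset.mem_range.mp (Finset.mem_coe.mp hj))
    rw [← hT]
    apply Finset.card_bij (fun r _ => ((r : ℕ) : ZMod m))
    · intro r hr
      rw [hS, Finset.mem_filter] at hr
      obtain ⟨hrm, j, hj⟩ := hr
      rw [Finset.mem_image]
      refine ⟨j % n, Finset.mem_range.mpr (Nat.mod_lt _ hn0), ?_⟩
      rw [hn, pow_mod_orderOf]
      exact hj.symm
    · intro r hr s hs hrs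
      rw [hS, Finset.mem_filter, Finset.mem_range] at hr hs
      have := congrArg ZMod.val hrs
      rwa [ZMod.val_cast_of_lt hr.1, ZMod.val_cast_of_lt hs.1] at this
    · intro x hx
      rw [Finset.mem_image] at hx
      obtain ⟨j, _, hj⟩ := hx
      refine ⟨x.val, ?_, ZMod.natCast_rightInverse x⟩
      rw [hS, Finset.mem_filter]
      refine ⟨Finset.mem_range.mpr (ZMod.val_lt x), j, ?_⟩
      rw [ZMod.natCast_rightInverse x]
      exact hj.symm
  -- decomposition r*a = (r*a % m) + m*(r*a/m) over ℤ
  have hanz : ∀ r : ℕ, (r : ℤ) * (a : ℤ)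
      = ((r * a % m : ℕ) : ℤ) + (m : ℤ) * ((r * a / m : ℕ) : ℤ) := by
    intro r
    have h := Nat.mod_add_div (r * a) m
    have h2 : ((r * a % m : ℕ) : ℤ) + (m : ℤ) * ((r * a / m : ℕ) : ℤ)
        = ((r : ℕ) : ℤ) * ((a : ℕ) : ℤ) := by exact_mod_cast h
    exact h2.symm
  obtain ⟨l, hl⟩ : ∃ l, L = l + 1 := ⟨L - 1, by omega⟩
  -- per-element congruence mod m²
  have hone : ∀ r ∈ S, ((r : ℤ) * (a : ℤ)) ^ L ≡ ((r * a % m : ℕ) : ℤ) ^ L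
      + (L : ℤ) * (m : ℤ) * ((r * a / m : ℕ) : ℤ) * ((r : ℤ) * (a : ℤ)) ^ (L - 1)
      [ZMOD (m : ℤ) ^ 2] := by
    intro r hr
    set x : ℤ := ((r * a % m : ℕ) : ℤ) with hx
    set q : ℤ := ((r * a / m : ℕ) : ℤ) with hq
    set y : ℤ := (m : ℤ) * q with hy
    have hxy : (r : ℤ) * (a : ℤ) = x + y := hanz r
    have hdvd : ((m : ℤ)) ^ 2 ∣ y ^ 2 := ⟨q ^ 2, by rw [hy]; ring⟩
    have hb2 : (x + y) ^ (l + 1) ≡ x ^ (l + 1) + ((l : ℤ) + 1) * x ^ l * y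
        [ZMOD (m : ℤ) ^ 2] := (intBinom x y l).of_dvd hdvd
    have hxm : x ≡ (r : ℤ) * (a : ℤ) [ZMOD (m : ℤ)] := by
      rw [hxy]
      exact Int.modEq_iff_dvd.mpr ⟨q, by rw [hy]; ring⟩
    have hxl : (L : ℤ) * q * x ^ l ≡ (L : ℤ) * q * ((r : ℤ) * (a : ℤ)) ^ l
        [ZMOD (m : ℤ)] := (hxm.pow l).mul_left _
    have hxl2 : (m : ℤ) * ((L : ℤ) * q * x ^ l) ≡ (m : ℤ) * ((L : ℤ) * q * ((r : ℤ) * (a : ℤ)) ^ l)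
        [ZMOD (m : ℤ) ^ 2] := by
      have := hxl.mul_left' (c := (m : ℤ))
      rwa [← sq] at this
    calc ((r : ℤ) * (a : ℤ)) ^ L = (x + y) ^ (l + 1) := by rw [hxy, hl]
      _ ≡ x ^ (l + 1) + ((l : ℤ) + 1) * x ^ l * y [ZMOD (m : ℤ) ^ 2] := hb2
      _ = x ^ L + (m : ℤ) * ((L : ℤ) * q * x ^ l) := by
          rw [hl, hy]; push_cast; ring
      _ ≡ x ^ L + (m : ℤ) * ((L : ℤ) * q * ((r : ℤ) * (a : ℤ)) ^ l) [ZMOD (m : ℤ) ^ 2] :=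
          (Int.ModEq.refl _).add hxl2
      _ = x ^ L + (L : ℤ) * (m : ℤ) * q * ((r : ℤ) * (a : ℤ)) ^ (L - 1) := by
          have : L - 1 = l := by omega
          rw [this]; ring
  -- sum the congruences
  have hsum := sumModEq S _ _ _ hone
  set T : ℤ := ∑ r ∈ S, (r : ℤ) ^ L with hT
  set W : ℤ := ∑ r ∈ S, ((r * a / m : ℕ) : ℤ) * ((r : ℤ) * (a : ℤ)) ^ (L - 1) with hW
  have hsum' : T * (a : ℤ) ^ L ≡ T + (L : ℤ) * (m : ℤ) * W [ZMOD (m : ℤ) ^ 2] := by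
    have hlhs : ∑ r ∈ S, ((r : ℤ) * (a : ℤ)) ^ L = T * (a : ℤ) ^ L := by
      rw [hT, Finset.sum_mul]
      exact Finset.sum_congr rfl fun r _ => by rw [mul_pow]
    have hrhs : (∑ r ∈ S, (((r * a % m : ℕ) : ℤ) ^ L
        + (L : ℤ) * (m : ℤ) * ((r * a / m : ℕ) : ℤ) * ((r : ℤ) * (a : ℤ)) ^ (L - 1)))
        = T + (L : ℤ) * (m : ℤ) * W := by
      rw [Finset.sum_add_distrib, hbij, hW, Finset.mul_sum]
      congr 1
      exact Finset.sum_congr rfl fun r _ => by ring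
    rw [← hlhs, ← hrhs]
    exact hsum
  -- divide by m
  have hC : (m : ℤ) * carQuot m (a : ℕ) = ((a : ℕ) : ℤ) ^ L - 1 := by
    have h := hLpow ((a : ℕ) : ℤ) hacop
    exact Int.mul_ediv_cancel' (dvd_sub_comm.mp (Int.ModEq.dvd h))
  have hkey : carQuot m (a : ℕ) * T ≡ (L : ℤ) * W [ZMOD (m : ℤ)] := by
    rw [Int.modEq_iff_dvd]
    have hd : (m : ℤ) ^ 2 ∣ (T + (L : ℤ) * (m : ℤ) * W) - T * (a : ℤ) ^ L :=
      Int.ModEq.dvd hsum'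
    have hm2 : (m : ℤ) * ((L : ℤ) * W - carQuot m (a : ℕ) * T)
        = (T + (L : ℤ) * (m : ℤ) * W) - T * (a : ℤ) ^ L := by
      have ha2 : ((a : ℕ) : ℤ) ^ L = (m : ℤ) * carQuot m (a : ℕ) + 1 := by omega
      rw [ha2]; ring
    have h3 : (m : ℤ) * (m : ℤ) ∣ (m : ℤ) * ((L : ℤ) * W - carQuot m (a : ℕ) * T) := by
      rw [hm2, ← sq]; exact hd
    exact (mul_dvd_mul_iff_left (by positivity : (m : ℤ) ≠ 0)).mp h3
  -- final chain, all in ℤ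
  rw [hDouble]
  set D : ℤ := ∑ r ∈ S, ((r * a / m : ℕ) : ℤ) * (r : ℤ) ^ (L - 1) with hD
  have hWD : W = ((a : ℕ) : ℤ) ^ (L - 1) * D := by
    rw [hW, hD, Finset.mul_sum]
    exact Finset.sum_congr rfl fun r _ => by rw [mul_pow]; ring
  have hTn : T ≡ (n : ℤ) [ZMOD (m : ℤ)] := by
    have h := sumModEq S (fun r : ℕ => ((r : ℕ) : ℤ) ^ L) (fun _ => (1 : ℤ)) (m : ℤ)
      (fun r hr => hLpow ((r : ℕ) : ℤ)
        (by rw [Int.gcd_natCast_natCast]; exact hScop r hr))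
    rw [hT]
    simpa [Finset.sum_const, hcard] using h
  have hAL : ((a : ℕ) : ℤ) ^ L ≡ 1 [ZMOD (m : ℤ)] := hLpow _ hacop
  have hL1 : ((a : ℕ) : ℤ) ^ (L - 1) * ((a : ℕ) : ℤ) = ((a : ℕ) : ℤ) ^ L := by
    rw [← pow_succ]
    congr 1
    omega
  calc carQuot m (a : ℕ)
      = carQuot m (a : ℕ) * 1 := (mul_one _).symm
    _ ≡ carQuot m (a : ℕ) * (((a * n : ℕ) : ℤ) * b) [ZMOD (m : ℤ)] := hb.symm.mul_left _
    _ = (carQuot m (a : ℕ) * (n : ℤ)) * (((a : ℕ) : ℤ) * b) := by push_cast; ring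
    _ ≡ (carQuot m (a : ℕ) * T) * (((a : ℕ) : ℤ) * b) [ZMOD (m : ℤ)] :=
        (hTn.symm.mul_left _).mul_right _
    _ ≡ ((L : ℤ) * W) * (((a : ℕ) : ℤ) * b) [ZMOD (m : ℤ)] := hkey.mul_right _
    _ = (L : ℤ) * b * D * (((a : ℕ) : ℤ) ^ (L - 1) * ((a : ℕ) : ℤ)) := by rw [hWD]; ring
    _ = (L : ℤ) * b * D * ((a : ℕ) : ℤ) ^ L := by rw [hL1]
    _ ≡ (L : ℤ) * b * D * 1 [ZMOD (m : ℤ)] := hAL.mul_left _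
    _ = (L : ℤ) * b * D := mul_one _
end

section
/- Let m = p_1^{r_1} ⋯ p_k^{r_k} be the prime factorization of an integer m ≥ 2, and let a be an integer with gcd(a, m) = 1. For 1 ≤ i ≤ k, let d_i = λ(m)/λ(p_i^{r_i}), m_i = m/p_i^{r_i}, and let m_i' be an integer with m_i² · m_i' ≡ 1 (mod p_i^{r_i}). Then C_m(a) ≡ Σ_{i=1}^{k} m_i · m_i' · d_i · C_{p_i^{r_i}}(a) (mod m). -/
lemma carmichael_mem {m : ℕ} (hm : 1 ≤ m) :
    0 < carmichael m ∧
      ∀ a : ℤ, Int.gcd a m = 1 → a ^ carmichael m ≡ 1 [ZMOD (m : ℤ)] := by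
  have hne : m.totient ∈ {n : ℕ | 0 < n ∧ ∀ a : ℤ, Int.gcd a m = 1 → a ^ n ≡ 1 [ZMOD (m : ℤ)]} := by
    refine ⟨Nat.totient_pos.2 hm, fun a hga => ?_⟩
    haveI : NeZero m := ⟨by omega⟩
    have hco : IsCoprime a (m : ℤ) := Int.isCoprime_iff_gcd_eq_one.mpr hga
    obtain ⟨u, v, huv⟩ := hco
    have hu : (a : ZMod m) * (u : ZMod m) = 1 := by
      have := congrArg (fun z : ℤ => (z : ZMod m)) huv
      push_cast at this
      simpa [ZMod.natCast_self, mul_comm] using this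
    have hunit : IsUnit ((a : ℤ) : ZMod m) := IsUnit.of_mul_eq_one _ hu
    obtain ⟨x, hx⟩ := hunit
    have hxp : ((a : ZMod m)) ^ m.totient = 1 := by
      have := ZMod.pow_totient x
      calc ((a:ZMod m))^m.totient = (x:ZMod m)^m.totient := by rw [hx]
        _ = ((x ^ m.totient : (ZMod m)ˣ) : ZMod m) := by push_cast; ring
        _ = 1 := by rw [this]; rfl
    have := (ZMod.intCast_eq_intCast_iff (a ^ m.totient) 1 m).mp (by push_cast; simpa using hxp)
    simpa using this
  exact Nat.sInf_mem ⟨_, hne⟩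

lemma carmichael_dvd {m : ℕ} (hm : 1 ≤ m) {n : ℕ} (hn : 0 < n)
    (h : ∀ a : ℤ, Int.gcd a m = 1 → a ^ n ≡ 1 [ZMOD (m : ℤ)]) :
    carmichael m ∣ n := by
  obtain ⟨hpos, hspec⟩ := carmichael_mem hm
  set L := carmichael m with hL
  rcases Nat.eq_zero_or_pos (n % L) with h0 | hpos'
  · exact Nat.dvd_of_mod_eq_zero h0
  · exfalso
    have hmem : n % L ∈ {t : ℕ | 0 < t ∧ ∀ a : ℤ, Int.gcd a m = 1 → a ^ t ≡ 1 [ZMOD (m : ℤ)]} := by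
      refine ⟨hpos', fun a hga => ?_⟩
      have hn' : a ^ n ≡ 1 [ZMOD (m : ℤ)] := h a hga
      have hsplit : a ^ n = (a ^ L) ^ (n / L) * a ^ (n % L) := by
        rw [← pow_mul, ← pow_add, Nat.div_add_mod]
      have h1 : (a ^ L) ^ (n / L) ≡ 1 [ZMOD (m : ℤ)] := by
        simpa using (hspec a hga).pow (n / L)
      have h2 : a ^ n ≡ a ^ (n % L) [ZMOD (m : ℤ)] := by
        calc a ^ n = (a ^ L) ^ (n / L) * a ^ (n % L) := hsplit
          _ ≡ 1 * a ^ (n % L) [ZMOD (m : ℤ)] := h1.mul_right _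
          _ = a ^ (n % L) := one_mul _
      exact h2.symm.trans hn'
    have hle : carmichael m ≤ n % L := Nat.sInf_le hmem
    have hlt : n % L < L := Nat.mod_lt _ hpos
    omega

lemma binom_aux (q C : ℤ) : ∀ d : ℕ, (q ^ 2 : ℤ) ∣ ((1 + q * C) ^ d - 1 - d * q * C)
  | 0 => by simp
  | (d + 1) => by
    obtain ⟨t, ht⟩ := binom_aux q C d
    refine ⟨(1 + q * C) * t + d * C ^ 2, ?_⟩
    push_cast
    linear_combination (1 + q * C) * ht

lemma isCoprime_of_modEq {a b n : ℤ} (h : a ≡ b [ZMOD n]) (hc : IsCoprime a n) :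
    IsCoprime b n := by
  obtain ⟨t, ht⟩ := Int.ModEq.dvd h
  have : b = a + n * t := by linarith
  rw [this]
  exact hc.add_mul_left_left t

lemma carmichael_dvd_carmichael {q s : ℕ} (hq : 1 ≤ q) (hs : 1 ≤ s)
    (hco : Nat.Coprime q s) : carmichael q ∣ carmichael (q * s) := by
  have hqs : 1 ≤ q * s := Nat.one_le_iff_ne_zero.mpr (by positivity)
  obtain ⟨hLpos, hLspec⟩ := carmichael_mem hqs
  refine carmichael_dvd hq hLpos (fun a hga => ?_)
  obtain ⟨u, v, huv⟩ := (Nat.isCoprime_iff_coprime.mpr hco : IsCoprime (q : ℤ) s)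
  set b : ℤ := a * (v * s) + u * q with hb
  have hba : b ≡ a [ZMOD (q : ℤ)] := by
    refine (Int.modEq_iff_dvd.mpr ⟨u - a * u, ?_⟩).symm
    linear_combination a * huv
  have hb1 : b ≡ 1 [ZMOD (s : ℤ)] := by
    refine (Int.modEq_iff_dvd.mpr ⟨a * v - v, ?_⟩).symm
    linear_combination huv
  have hcaq : IsCoprime a (q : ℤ) := Int.isCoprime_iff_gcd_eq_one.mpr hga
  have hcbq : IsCoprime b (q : ℤ) := isCoprime_of_modEq hba.symm hcaq
  have hcbs : IsCoprime b (s : ℤ) := isCoprime_of_modEq hb1.symm isCoprime_one_left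
  have hgb : Int.gcd b (q * s : ℕ) = 1 := by
    rw [← Int.isCoprime_iff_gcd_eq_one]
    push_cast
    exact hcbq.mul_right hcbs
  have hbpow : b ^ carmichael (q * s) ≡ 1 [ZMOD ((q * s : ℕ) : ℤ)] := hLspec b hgb
  have hdvd : (q : ℤ) ∣ ((q * s : ℕ) : ℤ) := by push_cast; exact ⟨s, rfl⟩
  have hbq : b ^ carmichael (q * s) ≡ 1 [ZMOD (q : ℤ)] := hbpow.of_dvd hdvd
  calc a ^ carmichael (q * s) ≡ b ^ carmichael (q * s) [ZMOD (q : ℤ)] := (hba.pow _).symm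
    _ ≡ 1 [ZMOD (q : ℤ)] := hbq


theorem stmt12 (m : ℕ) (hm : 2 ≤ m) (k : ℕ) (p r : Fin k → ℕ)
    (hp : ∀ i, (p i).Prime) (hr : ∀ i, 1 ≤ r i) (hinj : Function.Injective p)
    (hfac : m = ∏ i, p i ^ r i)
    (a : ℤ) (ha : Int.gcd a m = 1)
    (m' : Fin k → ℤ)
    (hm' : ∀ i, ((m / p i ^ r i : ℕ) : ℤ) ^ 2 * m' i ≡ 1 [ZMOD ((p i ^ r i : ℕ) : ℤ)]) :
    carQuot m a ≡
      ∑ i, ((m / p i ^ r i : ℕ) : ℤ) * m' i *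
        ((carmichael m / carmichael (p i ^ r i) : ℕ) : ℤ) *
          carQuot (p i ^ r i) a [ZMOD (m : ℤ)] := by
  classical
  have hq2 : ∀ i, 2 ≤ p i ^ r i := fun i =>
    Nat.one_lt_pow (by have := hr i; omega) (hp i).one_lt
  have hqpos : ∀ i, 0 < p i ^ r i := fun i => by have := hq2 i; omega
  have hcopq : ∀ i j, i ≠ j → Nat.Coprime (p i ^ r i) (p j ^ r j) := fun i j hij =>
    Nat.Coprime.pow _ _ ((Nat.coprime_primes (hp i) (hp j)).mpr (fun h => hij (hinj h)))
  have hqdvd : ∀ i, p i ^ r i ∣ m := fun i =>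
    hfac ▸ Finset.dvd_prod_of_mem _ (Finset.mem_univ i)
  have hmdiv : ∀ i, m / p i ^ r i = ∏ l ∈ Finset.univ.erase i, p l ^ r l := by
    intro i
    have h1 : m = p i ^ r i * ∏ l ∈ Finset.univ.erase i, p l ^ r l := by
      rw [hfac]; exact (Finset.mul_prod_erase _ _ (Finset.mem_univ i)).symm
    rw [h1, Nat.mul_div_cancel_left _ (hqpos i)]
  have hcopm : ∀ i, Nat.Coprime (p i ^ r i) (m / p i ^ r i) := by
    intro i
    rw [hmdiv i]
    exact Nat.Coprime.prod_right fun j hj =>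
      hcopq i j (fun h => (Finset.mem_erase.mp hj).1 h.symm)
  have hm1 : 1 ≤ m := by omega
  obtain ⟨hLpos, hLspec⟩ := carmichael_mem hm1
  have hmq : ∀ i, m = p i ^ r i * (m / p i ^ r i) := fun i =>
    (Nat.mul_div_cancel' (hqdvd i)).symm
  have hmdpos : ∀ i, 1 ≤ m / p i ^ r i := fun i =>
    Nat.div_pos (Nat.le_of_dvd (by omega) (hqdvd i)) (hqpos i)
  have hLdvd : ∀ i, carmichael (p i ^ r i) ∣ carmichael m := by
    intro i
    have := carmichael_dvd_carmichael (q := p i ^ r i) (s := m / p i ^ r i)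
      (by have := hq2 i; omega) (hmdpos i) (hcopm i)
    rwa [← hmq i] at this
  have haq : ∀ i, Int.gcd a ((p i ^ r i : ℕ) : ℤ) = 1 := by
    intro i
    rw [← Int.isCoprime_iff_gcd_eq_one]
    exact (Int.isCoprime_iff_gcd_eq_one.mpr ha).of_isCoprime_of_dvd_right
      (Int.natCast_dvd_natCast.mpr (hqdvd i))
  have hXm : carQuot m a * m = a ^ carmichael m - 1 :=
    Int.ediv_mul_cancel (hLspec a ha).symm.dvd
  have hCq : ∀ i, carQuot (p i ^ r i) a * (p i ^ r i : ℕ) =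
      a ^ carmichael (p i ^ r i) - 1 := by
    intro i
    obtain ⟨_, hspec⟩ := carmichael_mem (m := p i ^ r i) (by have := hq2 i; omega)
    exact Int.ediv_mul_cancel (hspec a (haq i)).symm.dvd
  rw [Int.modEq_iff_dvd]
  have hmprod : (m : ℤ) = ∏ i, ((p i ^ r i : ℕ) : ℤ) := by rw [hfac]; push_cast; ring
  rw [hmprod]
  apply Finset.prod_dvd_of_coprime
  · intro i _ j _ hij
    exact Nat.isCoprime_iff_coprime.mpr (hcopq i j hij)
  · intro j _
    rw [← Finset.add_sum_erase Finset.univ _ (Finset.mem_univ j)]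
    set Q : ℤ := ((p j ^ r j : ℕ) : ℤ) with hQdef
    set M : ℤ := ((m / p j ^ r j : ℕ) : ℤ) with hMdef
    set D : ℤ := ((carmichael m / carmichael (p j ^ r j) : ℕ) : ℤ) with hDdef
    set Cj : ℤ := carQuot (p j ^ r j) a with hCjdef
    set X : ℤ := carQuot m a with hXdef
    have h2 : Q ∣ ∑ i ∈ Finset.univ.erase j, ((m / p i ^ r i : ℕ) : ℤ) * m' i *
        ((carmichael m / carmichael (p i ^ r i) : ℕ) : ℤ) * carQuot (p i ^ r i) a := by
      refine Finset.dvd_sum fun i hi => ?_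
      have hij : i ≠ j := (Finset.mem_erase.mp hi).1
      have hd : p j ^ r j ∣ m / p i ^ r i := by
        rw [hmdiv i]
        exact Finset.dvd_prod_of_mem _ (Finset.mem_erase.mpr ⟨hij.symm, Finset.mem_univ j⟩)
      exact (((Int.natCast_dvd_natCast.mpr hd).mul_right _).mul_right _).mul_right _
    have h3 : Q ∣ M * m' j * D * Cj - X := by
      have hq0 : Q ≠ 0 := by
        simp only [hQdef, ne_eq, Nat.cast_eq_zero]
        have := hq2 j; omega
      have hLj : carmichael (p j ^ r j) * (carmichael m / carmichael (p j ^ r j)) =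
          carmichael m := Nat.mul_div_cancel' (hLdvd j)
      have hQM : (m : ℤ) = Q * M := by
        rw [hQdef, hMdef, ← Nat.cast_mul, ← hmq j]
      obtain ⟨s, hs⟩ := binom_aux Q Cj (carmichael m / carmichael (p j ^ r j))
      have hpow : (1 + Q * Cj) ^ (carmichael m / carmichael (p j ^ r j)) =
          a ^ carmichael m := by
        have h1 : a ^ carmichael (p j ^ r j) = 1 + Q * Cj := by
          have := hCq j; rw [← hQdef, ← hCjdef] at this; linarith
        have h2 : a ^ carmichael m =
            (a ^ carmichael (p j ^ r j)) ^ (carmichael m / carmichael (p j ^ r j)) := by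
          conv_lhs => rw [← hLj]
          rw [pow_mul]
        rw [h2, h1]
      rw [hpow] at hs
      have hXM : X * M = D * Cj + Q * s := by
        apply mul_left_cancel₀ hq0
        linear_combination hXm + hs - X * hQM
      obtain ⟨t, ht⟩ := (hm' j).symm.dvd
      have hcop : IsCoprime Q (M ^ 2) :=
        (Nat.isCoprime_iff_coprime.mpr (hcopm j)).pow_right
      have key : M ^ 2 * (M * m' j * D * Cj - X) = Q * (M * D * Cj * t - M * s) := by
        linear_combination (M * D * Cj) * ht - M * hXM
      exact hcop.dvd_of_dvd_mul_left ⟨_, key⟩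
    have hre : (M * m' j * D * Cj +
        ∑ i ∈ Finset.univ.erase j, ((m / p i ^ r i : ℕ) : ℤ) * m' i *
          ((carmichael m / carmichael (p i ^ r i) : ℕ) : ℤ) * carQuot (p i ^ r i) a) - X =
        (M * m' j * D * Cj - X) +
        ∑ i ∈ Finset.univ.erase j, ((m / p i ^ r i : ℕ) : ℤ) * m' i *
          ((carmichael m / carmichael (p i ^ r i) : ℕ) : ℤ) * carQuot (p i ^ r i) a := by
      ring
    rw [hre]
    exact dvd_add h3 h2
end

section
/- Let m ≥ 3 be an integer and a an integer with 1 ≤ a ≤ m and gcd(a, m) = 1. Then m cannot be a Carmichael–Wieferich number with base a and with base m − a simultaneously; that is, it is not the case that both m² divides a^{λ(m)} − 1 and m² divides (m − a)^{λ(m)} − 1. -/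
private lemma totient_mem (m : ℕ) (hm : 2 ≤ m) :
    m.totient ∈ {n : ℕ | 0 < n ∧ ∀ a : ℤ, Int.gcd a m = 1 → a ^ n ≡ 1 [ZMOD (m : ℤ)]} := by
  refine ⟨Nat.totient_pos.2 (by omega), fun a hga => ?_⟩
  have hcop : IsCoprime a (m : ℤ) := Int.isCoprime_iff_gcd_eq_one.2 hga
  obtain ⟨u, v, huv⟩ := hcop
  have hu : IsUnit (a : ZMod m) := by
    refine IsUnit.of_mul_eq_one (u : ZMod m) ?_
    have : ((u * a + v * m : ℤ) : ZMod m) = ((1 : ℤ) : ZMod m) := by rw [huv]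
    push_cast at this
    simpa [ZMod.natCast_self, mul_comm] using this
  have h := ZMod.pow_totient hu.unit
  have h2 : ((a : ZMod m)) ^ m.totient = 1 := by
    rw [← hu.unit_spec, ← Units.val_pow_eq_pow_val, h, Units.val_one]
  have : ((a ^ m.totient : ℤ) : ZMod m) = ((1 : ℤ) : ZMod m) := by push_cast; simpa using h2
  exact (ZMod.intCast_eq_intCast_iff _ _ _).1 this

private lemma binom (x b : ℤ) : ∀ n : ℕ,
    (x + b) ^ (n + 1) ≡ x ^ (n + 1) + (n + 1) * x ^ n * b [ZMOD b ^ 2] := by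
  intro n
  induction n with
  | zero => simpa using Int.ModEq.refl _
  | succ n ih =>
    have step : (x + b) ^ (n + 2) ≡ (x ^ (n + 1) + (n + 1) * x ^ n * b) * (x + b) [ZMOD b ^ 2] := by
      calc (x + b) ^ (n + 2) = (x + b) ^ (n + 1) * (x + b) := by ring
        _ ≡ (x ^ (n + 1) + (n + 1) * x ^ n * b) * (x + b) [ZMOD b ^ 2] := ih.mul_right _
    refine step.trans ?_
    have heq : (x ^ (n + 1) + (n + 1) * x ^ n * b) * (x + b)
        = x ^ (n + 2) + ((n : ℤ) + 1 + 1) * x ^ (n + 1) * b + ((n + 1) * x ^ n) * b ^ 2 := by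
      push_cast; ring
    rw [heq]
    have : x ^ (n + 2) + ((n : ℤ) + 1 + 1) * x ^ (n + 1) * b + ((n + 1) * x ^ n) * b ^ 2
        ≡ x ^ (n + 2) + ((n : ℤ) + 1 + 1) * x ^ (n + 1) * b [ZMOD b ^ 2] := by
      rw [Int.modEq_iff_dvd]
      exact ⟨-(((n : ℤ) + 1) * x ^ n), by ring⟩
    refine this.trans ?_
    have heq2 : x ^ (n + 2) + ((n : ℤ) + 1 + 1) * x ^ (n + 1) * b
        = x ^ (n + 1 + 1) + (((n + 1 : ℕ) : ℤ) + 1) * x ^ (n + 1) * b := by push_cast; ring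
    rw [heq2]

theorem stmt14 (m : ℕ) (hm : 3 ≤ m) (a : ℤ) (h1 : 1 ≤ a) (h2 : a ≤ m)
    (ha : Int.gcd a m = 1) :
    ¬(((m : ℤ) ^ 2 ∣ a ^ carmichael m - 1) ∧
      ((m : ℤ) ^ 2 ∣ ((m : ℤ) - a) ^ carmichael m - 1)) := by
  rintro ⟨hd1, hd2⟩
  rw [show carmichael m = sInf {n : ℕ | 0 < n ∧ ∀ a : ℤ, Int.gcd a m = 1 →
      a ^ n ≡ 1 [ZMOD (m : ℤ)]} from rfl] at hd1 hd2
  have hmemφ := totient_mem m (by omega)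
  have hne : Set.Nonempty {n : ℕ | 0 < n ∧ ∀ a : ℤ, Int.gcd a m = 1 →
      a ^ n ≡ 1 [ZMOD (m : ℤ)]} := ⟨m.totient, hmemφ⟩
  have hmem := Nat.sInf_mem hne
  obtain ⟨hpos, hall⟩ := hmem
  set n := sInf {n : ℕ | 0 < n ∧ ∀ a : ℤ, Int.gcd a m = 1 →
      a ^ n ≡ 1 [ZMOD (m : ℤ)]} with hn
  have hle : n ≤ m.totient := Nat.sInf_le hmemφ
  have hlt : n < m := lt_of_le_of_lt hle (Nat.totient_lt m (by omega))
  -- n is even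
  have hneg1 := hall (-1) (by simp)
  have heven : Even n := by
    rcases Nat.even_or_odd n with h | hodd
    · exact h
    · exfalso
      rw [hodd.neg_one_pow] at hneg1
      have hdd : (m : ℤ) ∣ 2 := by simpa using hneg1.dvd
      have := Int.le_of_dvd (by norm_num) hdd
      omega
  obtain ⟨k, hk⟩ : ∃ k, n = k + 1 := ⟨n - 1, by omega⟩
  have hxk : (-a) ^ k = -(a ^ k) := by
    have hok : Odd k := by
      rcases heven with ⟨t, ht⟩
      exact ⟨t - 1, by omega⟩
    exact hok.neg_pow a
  have hb2 : ((m : ℤ) - a) ^ (k + 1) ≡ a ^ (k + 1) - ((k : ℤ) + 1) * a ^ k * m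
      [ZMOD (m : ℤ) ^ 2] := by
    have hb := binom (-a) (m : ℤ) k
    rw [show (-a + (m : ℤ)) = (m : ℤ) - a from by ring] at hb
    rw [show ((-a : ℤ)) ^ (k + 1) = a ^ (k + 1) from by rw [← hk]; exact heven.neg_pow a] at hb
    rw [hxk] at hb
    calc ((m : ℤ) - a) ^ (k + 1)
        ≡ a ^ (k + 1) + ((k : ℤ) + 1) * -(a ^ k) * ↑m [ZMOD (m : ℤ) ^ 2] := hb
      _ = a ^ (k + 1) - ((k : ℤ) + 1) * a ^ k * ↑m := by ring
  have hn' : (n : ℤ) = (k : ℤ) + 1 := by rw [hk]; push_cast; ring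
  have hb2' : ((m : ℤ) - a) ^ n ≡ a ^ n - (n : ℤ) * a ^ k * m [ZMOD (m : ℤ) ^ 2] := by
    rw [hn', hk]; exact hb2
  have hD1 : (m : ℤ) ^ 2 ∣ ((m : ℤ) - a) ^ n - a ^ n := by
    have := hd2.sub hd1
    simpa using this
  have hD2 : (m : ℤ) ^ 2 ∣ ((m : ℤ) - a) ^ n - (a ^ n - (n : ℤ) * a ^ k * m) := hb2'.symm.dvd
  have hdvd : (m : ℤ) ^ 2 ∣ (n : ℤ) * a ^ k * m := by
    have hsub := hD2.sub hD1
    have heq : (((m : ℤ) - a) ^ n - (a ^ n - (n : ℤ) * a ^ k * ↑m))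
        - (((m : ℤ) - a) ^ n - a ^ n) = (n : ℤ) * a ^ k * ↑m := by ring
    rwa [heq] at hsub
  have hmpos : (0 : ℤ) < m := by positivity
  have hdvd2 : (m : ℤ) ∣ (n : ℤ) * a ^ k := by
    rw [sq (m : ℤ)] at hdvd
    exact (mul_dvd_mul_iff_right (ne_of_gt hmpos)).1 hdvd
  have hcop : IsCoprime ((m : ℤ)) (a ^ k) :=
    ((Int.isCoprime_iff_gcd_eq_one.2 ha).pow_left).symm
  have hdvdn : (m : ℤ) ∣ (n : ℤ) := hcop.dvd_of_dvd_mul_right hdvd2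
  have hle2 : (m : ℤ) ≤ n := Int.le_of_dvd (by exact_mod_cast hpos) hdvdn
  have : m ≤ n := by exact_mod_cast hle2
  omega
end
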